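/- arXiv:1204.6689 — 11 statements merged into one kernel-verified Lean document; each statement's English description precedes it below -/
import Mathlib

section
/- For any positive integer m and any positive integer N > 1, the Dirichlet convolution of μ*_m and ν*_m vanishes at N, where μ*_m(n) = μ_m(n)·λ(n) and ν*_m(n) = (−e^{2πi/m})^{Ω(n)}; that is, ∑_{d ∣ N} μ*_m(d) · ν*_m(N/d) = 0. -/
open Real Complex Finset

namespace DirConvAux

open ArithmeticFunction
open scoped ArithmeticFunction.Omega

noncomputable def Fz (z : ℂ) : ArithmeticFunction ℂ :=
  ⟨fun n => if Squarefree n then z ^ (Ω n) else 0, by simp [not_squarefree_zero]⟩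

noncomputable def Gz (z : ℂ) : ArithmeticFunction ℂ :=
  ⟨fun n => if n = 0 then 0 else z ^ (Ω n), by simp⟩

lemma Fz_apply (z : ℂ) (n : ℕ) :
    Fz z n = if Squarefree n then z ^ (Ω n) else 0 := rfl

lemma Gz_apply (z : ℂ) (n : ℕ) :
    Gz z n = if n = 0 then 0 else z ^ (Ω n) := rfl

lemma Fz_isMult (z : ℂ) : (Fz z).IsMultiplicative := by
  rw [ArithmeticFunction.IsMultiplicative.iff_ne_zero]
  constructor
  · simp [Fz_apply]
  · intro a b ha hb hab
    simp only [Fz_apply, Nat.squarefree_mul hab,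
      ArithmeticFunction.cardFactors_mul ha hb]
    by_cases h1 : Squarefree a <;> by_cases h2 : Squarefree b <;>
      simp [h1, h2, pow_add]

lemma Gz_isMult (z : ℂ) : (Gz z).IsMultiplicative := by
  rw [ArithmeticFunction.IsMultiplicative.iff_ne_zero]
  constructor
  · simp [Gz_apply]
  · intro a b ha hb hab
    simp [Gz_apply, ha, hb, Nat.mul_ne_zero ha hb,
      ArithmeticFunction.cardFactors_mul ha hb, pow_add]

lemma conv_prime_pow (z : ℂ) {p k : ℕ} (hp : p.Prime) (hk : 0 < k) :
    (Fz (-z) * Gz z) (p ^ k) = 0 := by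
  obtain ⟨k, rfl⟩ := Nat.exists_eq_succ_of_ne_zero hk.ne'
  rw [ArithmeticFunction.mul_apply, Nat.sum_divisorsAntidiagonal (fun x y => Fz (-z) x * Gz z y),
    Nat.sum_divisors_prime_pow hp]
  have hdiv : ∀ i ∈ range (k + 2), p ^ (k + 1) / p ^ i = p ^ (k + 1 - i) := by
    intro i hi
    simp only [Finset.mem_range] at hi
    rw [Nat.pow_div (by omega) hp.pos]
  rw [Finset.sum_congr rfl fun i hi => by rw [hdiv i hi]]
  have hterm : ∀ i, Fz (-z) (p ^ i) * Gz z (p ^ (k + 1 - i)) =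
      if i = 0 then z ^ (k + 1) else if i = 1 then -(z ^ (k + 1)) else 0 := by
    intro i
    have hsf : Squarefree (p ^ i) ↔ i ≤ 1 := by
      rcases Nat.eq_zero_or_pos i with h | h
      · simp [h]
      · rw [Nat.squarefree_pow_iff hp.ne_one h.ne']
        constructor
        · rintro ⟨_, rfl⟩; rfl
        · intro hi; exact ⟨hp.squarefree, by omega⟩
    simp only [Fz_apply, Gz_apply, hsf, ArithmeticFunction.cardFactors_apply_prime_pow hp,
      pow_eq_zero_iff, hp.ne_zero, ne_eq, false_and, if_false,
      if_neg (pow_ne_zero _ hp.ne_zero)]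
    rcases i with _ | _ | i
    · simp
    · simp [pow_succ]; ring
    · simp [show ¬ (i + 2 ≤ 1) by omega]
  rw [Finset.sum_congr rfl fun i _ => hterm i]
  have hsplit : ∀ i : ℕ, (if i = 0 then z ^ (k + 1) else if i = 1 then -(z ^ (k + 1)) else 0)
      = (if i = 0 then z ^ (k + 1) else 0) + (if i = 1 then -(z ^ (k + 1)) else 0) := by
    intro i; rcases i with _ | _ | i <;> simp
  rw [Finset.sum_congr rfl fun i _ => hsplit i, Finset.sum_add_distrib,
    Finset.sum_ite_eq' (range (k.succ + 1)) 0 (fun _ => z ^ (k + 1)),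
    Finset.sum_ite_eq' (range (k.succ + 1)) 1 (fun _ => -(z ^ (k + 1)))]
  simp [Finset.mem_range]

end DirConvAux

theorem dirichlet_conv_vanishes (m : ℕ) (hm : 0 < m) (N : ℕ) (hN : 1 < N) :
    ∑ d ∈ N.divisors,
      ((if Squarefree d then (-Complex.exp (2 * Real.pi * Complex.I / m)) ^
          (ArithmeticFunction.cardDistinctFactors d) else 0) *
        (-1 : ℂ) ^ (ArithmeticFunction.cardFactors d)) *
      (-Complex.exp (2 * Real.pi * Complex.I / m)) ^ (ArithmeticFunction.cardFactors (N / d))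
      = 0 := by
  set z : ℂ := -Complex.exp (2 * Real.pi * Complex.I / m) with hz
  have hN0 : N ≠ 0 := by omega
  have hstep : ∑ d ∈ N.divisors,
      ((if Squarefree d then z ^ (ArithmeticFunction.cardDistinctFactors d) else 0) *
        (-1 : ℂ) ^ (ArithmeticFunction.cardFactors d)) *
      z ^ (ArithmeticFunction.cardFactors (N / d))
      = ∑ d ∈ N.divisors, DirConvAux.Fz (-z) d * DirConvAux.Gz z (N / d) := by
    refine Finset.sum_congr rfl fun d hd => ?_
    rw [Nat.mem_divisors] at hd
    have hd0 : d ≠ 0 := fun h => hN0 (Nat.eq_zero_of_zero_dvd (h ▸ hd.1))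
    have hnd0 : N / d ≠ 0 := (Nat.div_ne_zero_iff_of_dvd hd.1).mpr ⟨hN0, hd0⟩
    rw [DirConvAux.Fz_apply, DirConvAux.Gz_apply, if_neg hnd0]
    by_cases hsf : Squarefree d
    · have : ArithmeticFunction.cardDistinctFactors d = ArithmeticFunction.cardFactors d :=
        (ArithmeticFunction.cardDistinctFactors_eq_cardFactors_iff_squarefree hd0).mpr hsf
      simp only [hsf, if_true, this]
      rw [show (-z) ^ ArithmeticFunction.cardFactors d
          = (-1) ^ ArithmeticFunction.cardFactors d * z ^ ArithmeticFunction.cardFactors d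
        from neg_pow _ _]
      ring
    · simp [hsf]
  rw [hstep, ← Nat.sum_divisorsAntidiagonal (fun x y => DirConvAux.Fz (-z) x * DirConvAux.Gz z y),
    ← ArithmeticFunction.mul_apply]
  rw [ArithmeticFunction.IsMultiplicative.multiplicative_factorization _
    ((DirConvAux.Fz_isMult (-z)).mul (DirConvAux.Gz_isMult z)) hN0]
  obtain ⟨p, hp⟩ : ∃ p, p ∈ N.primeFactors := by
    rcases N.exists_prime_and_dvd (by omega) with ⟨p, hp, hpd⟩
    exact ⟨p, Nat.mem_primeFactors.mpr ⟨hp, hpd, hN0⟩⟩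
  rw [Nat.mem_primeFactors] at hp
  refine Finset.prod_eq_zero (by
    rw [Nat.support_factorization]
    exact Nat.mem_primeFactors.mpr hp) ?_
  exact DirConvAux.conv_prime_pow z hp.1 (hp.1.factorization_pos_of_dvd hN0 hp.2.1)
end

section
/- The arithmetic function μ*_m defined by μ*_m(n) = μ_m(n)·λ(n) is the inverse of ν*_m(n) = (−e^{2πi/m})^{Ω(n)} with respect to Dirichlet convolution: for every n ≥ 1, ∑_{d ∣ n} μ*_m(d) ν*_m(n/d) equals 1 if n = 1 and 0 otherwise. -/
open Real Complex Finset

theorem dirichlet_inverse (m : ℕ) (hm : 0 < m) (n : ℕ) (hn : 1 ≤ n) :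
    ∑ d ∈ n.divisors,
      ((if Squarefree d then (-Complex.exp (2 * Real.pi * Complex.I / m)) ^
          (ArithmeticFunction.cardDistinctFactors d) else 0) *
        (-1 : ℂ) ^ (ArithmeticFunction.cardFactors d)) *
      (-Complex.exp (2 * Real.pi * Complex.I / m)) ^ (ArithmeticFunction.cardFactors (n / d))
      = if n = 1 then 1 else 0 := by
  have hn0 : n ≠ 0 := by omega
  set z : ℂ := -Complex.exp (2 * Real.pi * Complex.I / m) with hz
  have key : ∀ d ∈ n.divisors,
      ((if Squarefree d then z ^ (ArithmeticFunction.cardDistinctFactors d) else 0) *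
        (-1 : ℂ) ^ (ArithmeticFunction.cardFactors d)) *
      z ^ (ArithmeticFunction.cardFactors (n / d))
      = (ArithmeticFunction.moebius d : ℂ) * z ^ (ArithmeticFunction.cardFactors n) := by
    intro d hd
    obtain ⟨hdvd, -⟩ := Nat.mem_divisors.mp hd
    have hd0 : d ≠ 0 := fun h => hn0 (by simpa [h] using hdvd)
    by_cases hsq : Squarefree d
    · rw [if_pos hsq, ArithmeticFunction.moebius_apply_of_squarefree hsq]
      have hω : ArithmeticFunction.cardDistinctFactors d = ArithmeticFunction.cardFactors d :=
        (ArithmeticFunction.cardDistinctFactors_eq_cardFactors_iff_squarefree hd0).mpr hsq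
      have hnd0 : n / d ≠ 0 := (Nat.div_ne_zero_iff_of_dvd hdvd).mpr ⟨hn0, hd0⟩
      have hΩ : ArithmeticFunction.cardFactors n =
          ArithmeticFunction.cardFactors d + ArithmeticFunction.cardFactors (n / d) := by
        conv_lhs => rw [← Nat.mul_div_cancel' hdvd]
        exact ArithmeticFunction.cardFactors_mul hd0 hnd0
      rw [hω, hΩ, pow_add]
      push_cast
      ring
    · rw [if_neg hsq, ArithmeticFunction.moebius_eq_zero_of_not_squarefree hsq]
      simp
  rw [Finset.sum_congr rfl key, ← Finset.sum_mul]
  have : (∑ d ∈ n.divisors, (ArithmeticFunction.moebius d : ℂ)) =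
      ((ArithmeticFunction.moebius * ArithmeticFunction.zeta : ArithmeticFunction ℂ) n) := by
    rw [ArithmeticFunction.coe_mul_zeta_apply]
    simp [ArithmeticFunction.intCoe_apply]
  rw [this, ArithmeticFunction.coe_moebius_mul_coe_zeta, ArithmeticFunction.one_apply]
  by_cases h1 : n = 1 <;> simp [h1]
end

section
/- For every real x ≥ 1 and positive integer m, ∑_{n ≤ x} μ_m(n) ⌊x/n⌋ = ∑_{n ≤ x} (1 − e^{2πi/m})^{ω(n)}. -/
open Real Complex Finset

lemma divisor_sum_aux (z : ℂ) {k : ℕ} (hk : k ≠ 0) :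
    ∑ d ∈ k.divisors,
      (if Squarefree d then (-z) ^ (ArithmeticFunction.cardDistinctFactors d) else 0)
    = (1 - z) ^ (ArithmeticFunction.cardDistinctFactors k) := by
  have hω : ∀ n : ℕ, (ArithmeticFunction.cardDistinctFactors n : ℕ) = n.primeFactors.card := by
    intro n
    rw [ArithmeticFunction.cardDistinctFactors_apply, Nat.primeFactors, List.card_toFinset]
  rw [← Finset.sum_filter, Nat.sum_divisors_filter_squarefree hk, Nat.factors_eq]
  have hpf : (k.primeFactorsList : Multiset ℕ).toFinset = k.primeFactors := rfl
  rw [hpf]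
  have hstep : ∀ t ∈ k.primeFactors.powerset,
      (-z) ^ (ArithmeticFunction.cardDistinctFactors (t.val.prod) : ℕ) =
      (∏ _p ∈ t, (-z)) * ∏ _p ∈ k.primeFactors \ t, (1 : ℂ) := by
    intro t ht
    rw [Finset.mem_powerset] at ht
    have hprime : ∀ p ∈ t, p.Prime := fun p hp => Nat.prime_of_mem_primeFactors (ht hp)
    rw [t.prod_val, Function.id_def, hω, Nat.primeFactors_prod hprime, Finset.prod_const, Finset.prod_const,
      one_pow, mul_one]
  rw [Finset.sum_congr rfl hstep, ← Finset.prod_add, hω]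
  rw [Finset.prod_const]
  ring_nf

theorem sum_mu_m_floor (m : ℕ) (hm : 0 < m) (x : ℝ) (hx : 1 ≤ x) :
    ∑ n ∈ Finset.Icc 1 ⌊x⌋₊,
      (if Squarefree n then (-Complex.exp (2 * Real.pi * Complex.I / m)) ^
          (ArithmeticFunction.cardDistinctFactors n) else 0) * (⌊x / (n : ℝ)⌋₊ : ℂ)
    = ∑ n ∈ Finset.Icc 1 ⌊x⌋₊,
        (1 - Complex.exp (2 * Real.pi * Complex.I / m)) ^
          (ArithmeticFunction.cardDistinctFactors n) := by
  set z : ℂ := Complex.exp (2 * Real.pi * Complex.I / m) with hz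
  set N := ⌊x⌋₊ with hN
  set f : ℕ → ℂ := fun n =>
    if Squarefree n then (-z) ^ (ArithmeticFunction.cardDistinctFactors n) else 0 with hf
  -- step 1: ⌊x/n⌋₊ = N / n and equals card of multiples
  have hfloor : ∀ n ∈ Finset.Icc 1 N, (⌊x / (n : ℝ)⌋₊ : ℂ) =
      ((Finset.Icc 1 N).filter (fun k => n ∣ k)).card := by
    intro n hn
    rw [Finset.mem_Icc] at hn
    have h1 : ⌊x / (n : ℝ)⌋₊ = N / n := Nat.floor_div_natCast x n
    have h2 : ((Finset.Icc 1 N).filter (fun k => n ∣ k)).card = N / n := by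
      rw [← Nat.card_multiples N n]
      apply Finset.card_nbij (fun k => k - 1)
      · intro k hk
        simp only [Finset.mem_coe, Finset.mem_filter, Finset.mem_Icc, Finset.mem_range] at hk ⊢
        obtain ⟨⟨hk1, hk2⟩, hk3⟩ := hk
        constructor
        · omega
        · rwa [Nat.sub_add_cancel hk1]
      · intro a ha b hb hab
        simp only [Finset.coe_filter, Set.mem_setOf_eq, Finset.mem_Icc] at ha hb
        dsimp at hab
        omega
      · intro e he
        simp only [Finset.coe_filter, Set.mem_setOf_eq, Finset.mem_range,
          Set.mem_image, Finset.mem_Icc] at he ⊢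
        exact ⟨e + 1, ⟨⟨by omega, by omega⟩, he.2⟩, by omega⟩
    rw [h1, ← h2]
  rw [Finset.sum_congr rfl (fun n hn => by rw [hfloor n hn])]
  -- step 2: swap
  have hswap : ∑ n ∈ Finset.Icc 1 N, f n *
      (((Finset.Icc 1 N).filter (fun k => n ∣ k)).card : ℂ)
      = ∑ k ∈ Finset.Icc 1 N, ∑ n ∈ (Finset.Icc 1 N).filter (fun n => n ∣ k), f n := by
    have h1 : ∀ n, f n * (((Finset.Icc 1 N).filter (fun k => n ∣ k)).card : ℂ)
        = ∑ k ∈ Finset.Icc 1 N, if n ∣ k then f n else 0 := by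
      intro n
      rw [← Finset.sum_filter, Finset.sum_const, nsmul_eq_mul, mul_comm]
    simp_rw [h1]
    rw [Finset.sum_comm]
    exact Finset.sum_congr rfl fun k _ => (Finset.sum_filter _ _).symm
  rw [hswap]
  -- step 3: inner filter sum = divisor sum
  refine Finset.sum_congr rfl fun k hk => ?_
  rw [Finset.mem_Icc] at hk
  have hk0 : k ≠ 0 := by omega
  have hset : (Finset.Icc 1 N).filter (fun n => n ∣ k) = k.divisors := by
    ext d
    simp only [Finset.mem_filter, Finset.mem_Icc, Nat.mem_divisors]
    constructor
    · rintro ⟨_, hd⟩; exact ⟨hd, hk0⟩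
    · rintro ⟨hd, -⟩
      have hd1 : 1 ≤ d := Nat.pos_of_dvd_of_pos hd (by omega)
      exact ⟨⟨hd1, le_trans (Nat.le_of_dvd (by omega) hd) hk.2⟩, hd⟩
  rw [hset]
  exact divisor_sum_aux z hk0
end

section
/- The infinite product ∏_p (1 + e^{2πi/3}/p) over all primes p converges to 0, i.e., ∏_{p ≤ x}(1 + e^{2πi/3}/p) → 0 as x → ∞. -/
open Real Complex Finset Filter

private lemma omega_re : (Complex.exp (2 * Real.pi * Complex.I / 3)).re = -(1/2) := by
  have h : (2 * Real.pi * Complex.I / 3 : ℂ) = ((2*Real.pi/3 : ℝ) : ℂ) * Complex.I := by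
    push_cast; ring
  rw [h, Complex.exp_ofReal_mul_I_re]
  have : (2*Real.pi/3 : ℝ) = Real.pi - Real.pi/3 := by ring
  rw [this, Real.cos_pi_sub, Real.cos_pi_div_three]

private lemma omega_normSq : Complex.normSq (Complex.exp (2 * Real.pi * Complex.I / 3)) = 1 := by
  have h : (2 * Real.pi * Complex.I / 3 : ℂ) = ((2*Real.pi/3 : ℝ) : ℂ) * Complex.I := by
    push_cast; ring
  rw [h, ← Complex.sq_norm, Complex.norm_exp_ofReal_mul_I]; norm_num

private lemma factor_normSq (p : ℕ) (hp : 0 < p) :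
    Complex.normSq (1 + Complex.exp (2 * Real.pi * Complex.I / 3) / p)
      = 1 - 1/p + 1/(p:ℝ)^2 := by
  set ω := Complex.exp (2 * Real.pi * Complex.I / 3) with hω
  have hp' : (p:ℝ) ≠ 0 := by positivity
  have hre : (1 + ω / p).re = 1 + ω.re / p := by
    simp [Complex.add_re, Complex.div_re, Complex.normSq_natCast]
    field_simp
  have him : (1 + ω / p).im = ω.im / p := by
    simp [Complex.add_im, Complex.div_im, Complex.normSq_natCast]
    field_simp
  have him2 : ω.im * ω.im = 3/4 := by
    have h1 := omega_normSq; rw [← hω, Complex.normSq_apply, omega_re] at h1; nlinarith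
  rw [Complex.normSq_apply, hre, him, omega_re]
  field_simp
  linear_combination (4:ℝ) * him2

private lemma factor_norm_le (p : ℕ) (hp : 0 < p) :
    ‖(1 + Complex.exp (2 * Real.pi * Complex.I / 3) / p)‖
      ≤ Real.exp ((-(1/p) + 1/(p:ℝ)^2) / 2) := by
  have h1 : ‖(1 + Complex.exp (2 * Real.pi * Complex.I / 3) / p)‖^2
      = 1 - 1/p + 1/(p:ℝ)^2 := by
    rw [Complex.sq_norm, factor_normSq p hp]
  have h2 : 1 - 1/(p:ℝ) + 1/(p:ℝ)^2 ≤ Real.exp (-(1/p) + 1/(p:ℝ)^2) := by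
    have := Real.add_one_le_exp (-(1/(p:ℝ)) + 1/(p:ℝ)^2)
    linarith
  have h3 : ‖(1 + Complex.exp (2 * Real.pi * Complex.I / 3) / p)‖^2
      ≤ (Real.exp ((-(1/p) + 1/(p:ℝ)^2) / 2))^2 := by
    rw [← Real.exp_nat_mul]
    push_cast
    rw [show (2:ℝ) * ((-(1/p) + 1/(p:ℝ)^2)/2) = -(1/p) + 1/(p:ℝ)^2 by ring]
    rw [h1]; exact h2
  exact (pow_le_pow_iff_left₀ (norm_nonneg _) (Real.exp_nonneg _) two_ne_zero).mp h3

theorem prod_tendsto_zero_m3 :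
    Filter.Tendsto
      (fun N : ℕ => ∏ p ∈ (Finset.range N).filter Nat.Prime,
        (1 + Complex.exp (2 * Real.pi * Complex.I / 3) / p))
      Filter.atTop (nhds 0) := by
  rw [tendsto_zero_iff_norm_tendsto_zero]
  simp only [norm_prod]
  set S : ℕ → ℝ := fun N => ∑ p ∈ (Finset.range N).filter Nat.Prime, (1:ℝ)/p with hS
  set T : ℕ → ℝ := fun N => ∑ p ∈ (Finset.range N).filter Nat.Prime, 1/(p:ℝ)^2 with hT
  set g : ℕ → ℝ := fun N => Real.exp ((- S N + T N) / 2) with hg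
  have hsum2 : Summable (fun n : ℕ => 1/(n:ℝ)^2) := by
    have := Real.summable_one_div_nat_pow.mpr one_lt_two
    simpa using this
  set C : ℝ := ∑' n : ℕ, 1/(n:ℝ)^2 with hC
  have hbound : ∀ N, ∏ p ∈ (Finset.range N).filter Nat.Prime,
      ‖(1 + Complex.exp (2 * Real.pi * Complex.I / 3) / (p:ℂ))‖ ≤ g N := by
    intro N
    calc ∏ p ∈ (Finset.range N).filter Nat.Prime,
        ‖(1 + Complex.exp (2 * Real.pi * Complex.I / 3) / (p:ℂ))‖
        ≤ ∏ p ∈ (Finset.range N).filter Nat.Prime,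
          Real.exp ((-(1/p) + 1/(p:ℝ)^2) / 2) := by
          apply Finset.prod_le_prod (fun p _ => norm_nonneg _)
          intro p hp
          exact factor_norm_le p (Nat.Prime.pos (Finset.mem_filter.mp hp).2)
      _ = g N := by
          rw [← Real.exp_sum, hg]
          congr 1
          rw [← Finset.sum_div, Finset.sum_add_distrib, Finset.sum_neg_distrib]
  have hTC : ∀ N, T N ≤ C := by
    intro N
    exact Summable.sum_le_tsum _ (fun n _ => by positivity) hsum2
  have hSa : Filter.Tendsto S Filter.atTop Filter.atTop := by
    have hnn : ∀ n : ℕ, 0 ≤ Set.indicator {p : ℕ | p.Prime} (fun n : ℕ => (1:ℝ)/n) n :=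
      fun n => Set.indicator_nonneg (fun p _ => by positivity) n
    have hdiv := (not_summable_iff_tendsto_nat_atTop_of_nonneg hnn).mp
      not_summable_one_div_on_primes
    have heq : ∀ N, (∑ n ∈ Finset.range N,
        Set.indicator {p : ℕ | p.Prime} (fun n : ℕ => (1:ℝ)/n) n) = S N := by
      intro N
      rw [hS]
      simp only [Finset.sum_filter]
      refine Finset.sum_congr rfl fun n _ => ?_
      simp [Set.indicator_apply, Set.mem_setOf_eq]
    exact hdiv.congr heq
  have hga : Filter.Tendsto g Filter.atTop (nhds 0) := by
    rw [hg]
    apply Real.tendsto_exp_atBot.comp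
    apply tendsto_atBot_mono (g := fun N => (- S N + T N) / 2)
      (f := fun N => (- S N + C) / 2)
    · intro N
      have := hTC N
      gcongr
    · apply Filter.Tendsto.atBot_div_const (by norm_num : (0:ℝ) < 2)
      apply Filter.tendsto_atBot_add_const_right
      exact Filter.tendsto_neg_atTop_atBot.comp hSa
  exact squeeze_zero (fun N => Finset.prod_nonneg fun p _ => norm_nonneg _) hbound hga
end

section
/- For any positive integer m and complex s with Re(s) > 1, ∑_{n=1}^∞ (−e^{2πi/m})^{ω(n)}/n^s = ∏_p (1 − e^{2πi/m}/(p^s − 1)), where ω(n) is the number of distinct prime factors of n. -/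
open Real Complex Filter

lemma omega_eq_card_primeFactors (n : ℕ) :
    ArithmeticFunction.cardDistinctFactors n = n.primeFactors.card := by
  rw [ArithmeticFunction.cardDistinctFactors_apply, ← List.card_toFinset,
    Nat.toFinset_factors]

lemma omega_mul_of_coprime {a b : ℕ} (hab : Nat.Coprime a b) :
    ArithmeticFunction.cardDistinctFactors (a * b) =
      ArithmeticFunction.cardDistinctFactors a + ArithmeticFunction.cardDistinctFactors b := by
  simp only [omega_eq_card_primeFactors]
  rw [hab.primeFactors_mul, Finset.card_union_of_disjoint hab.disjoint_primeFactors]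

theorem zeta_m_euler_product (m : ℕ) (hm : 0 < m) (s : ℂ) (hs : 1 < s.re) :
    ∑' n : ℕ+, (-Complex.exp (2 * Real.pi * Complex.I / m)) ^
        (ArithmeticFunction.cardDistinctFactors (n : ℕ)) / ((n : ℕ) : ℂ) ^ s
      = ∏' p : Nat.Primes,
          (1 - Complex.exp (2 * Real.pi * Complex.I / m) / (((p : ℕ) : ℂ) ^ s - 1)) := by
  set z : ℂ := Complex.exp (2 * Real.pi * Complex.I / m) with hz_def
  have hs0 : s ≠ 0 := fun h => by simp [h] at hs; linarith
  set f : ℕ → ℂ := fun n => (-z) ^ (ArithmeticFunction.cardDistinctFactors n) / (n : ℂ) ^ s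
    with hf_def
  have hzabs : ‖z‖ = 1 := by
    rw [hz_def, show (2 * Real.pi * Complex.I / m : ℂ)
        = ((2 * Real.pi / m : ℝ) : ℂ) * Complex.I by push_cast; ring]
    exact Complex.norm_exp_ofReal_mul_I _
  have hf0 : f 0 = 0 := by
    simp [hf_def, Complex.zero_cpow hs0]
  have hf1 : f 1 = 1 := by
    simp [hf_def]
  have hmul : ∀ {a b : ℕ}, Nat.Coprime a b → f (a * b) = f a * f b := by
    intro a b hab
    simp only [hf_def, omega_mul_of_coprime hab, pow_add, Nat.cast_mul,
      Complex.natCast_mul_natCast_cpow]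
    exact mul_div_mul_comm _ _ _ _
  have hnorm : ∀ n : ℕ, 0 < n → ‖f n‖ = 1 / (n : ℝ) ^ s.re := by
    intro n hn
    rw [hf_def]
    rw [norm_div, norm_pow, norm_neg, hzabs, one_pow,
      Complex.norm_natCast_cpow_of_pos hn]
  have hsum : Summable fun n => ‖f n‖ := by
    refine Summable.of_nonneg_of_le (fun n => norm_nonneg _)
      (fun n => ?_) (Real.summable_one_div_nat_rpow.mpr hs)
    rcases Nat.eq_zero_or_pos n with rfl | hn
    · simp only [hf0, norm_zero]
      positivity
    · exact (hnorm n hn).le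
  have key := EulerProduct.eulerProduct_tprod hf1 hmul hsum hf0
  -- LHS : tsum over ℕ+ equals tsum over ℕ
  have hlhs : (∑' n : ℕ+, f (n : ℕ)) = ∑' n : ℕ, f n := by
    refine Function.Injective.tsum_eq (g := fun n : ℕ+ => (n : ℕ)) PNat.coe_injective ?_
    intro n hn
    have hn0 : n ≠ 0 := fun h => hn (h ▸ hf0)
    exact ⟨⟨n, Nat.pos_of_ne_zero hn0⟩, rfl⟩
  -- Euler factors
  have hfactor : ∀ p : Nat.Primes,
      (∑' e : ℕ, f ((p : ℕ) ^ e)) = 1 - z / (((p : ℕ) : ℂ) ^ s - 1) := by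
    intro p
    have hp := p.2
    have hp1 : (1 : ℝ) < (p : ℕ) := by exact_mod_cast hp.one_lt
    have hPs : (1 : ℝ) < ‖((p : ℕ) : ℂ) ^ s‖ := by
      rw [Complex.norm_natCast_cpow_of_pos hp.pos]
      exact (Real.one_lt_rpow_iff_of_pos (by positivity)).mpr
        (Or.inl ⟨hp1, by linarith⟩)
    have hP0 : ((p : ℕ) : ℂ) ^ s ≠ 0 := by
      intro h; rw [h] at hPs; simp at hPs; linarith
    have hP1 : ((p : ℕ) : ℂ) ^ s ≠ 1 := by
      intro h; rw [h] at hPs; simp at hPs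
    have hc : ‖(((p : ℕ) : ℂ) ^ s)⁻¹‖ < 1 := by
      rw [norm_inv]
      rw [inv_lt_one_iff₀]; right; exact hPs
    set c : ℂ := (((p : ℕ) : ℂ) ^ s)⁻¹ with hc_def
    have hfe : ∀ e : ℕ, f ((p : ℕ) ^ (e + 1)) = -z * (c * c ^ e) := by
      intro e
      have hω : ArithmeticFunction.cardDistinctFactors ((p : ℕ) ^ (e + 1)) = 1 :=
        ArithmeticFunction.cardDistinctFactors_apply_prime_pow hp (Nat.succ_ne_zero e)
      have hcast : (((p : ℕ) ^ (e + 1) : ℕ) : ℂ) ^ s = (((p : ℕ) : ℂ) ^ s) ^ (e + 1) := by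
        rw [Nat.cast_pow, ← Complex.natCast_cpow_natCast_mul, Complex.cpow_nat_mul]
      rw [hf_def]
      simp only [hω, pow_one, hcast]
      rw [div_eq_mul_inv, ← inv_pow, ← hc_def, pow_succ', mul_comm c (c ^ e)]
    have hsummable : Summable fun e : ℕ => f ((p : ℕ) ^ e) := by
      apply (hsum.of_norm).comp_injective
      intro a b hab
      exact Nat.pow_right_injective hp.two_le hab
    rw [Summable.tsum_eq_zero_add hsummable]
    have h0 : f ((p : ℕ) ^ 0) = 1 := by simpa using hf1
    rw [h0]
    simp only [hfe]
    rw [tsum_mul_left, tsum_mul_left, tsum_geometric_of_norm_lt_one hc]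
    have hgeo : c * (1 - c)⁻¹ = (((p : ℕ) : ℂ) ^ s - 1)⁻¹ := by
      rw [hc_def]
      field_simp
    rw [hgeo]
    ring
  rw [hlhs, ← key]
  exact tprod_congr fun p => by rw [hfactor p, div_eq_mul_inv]
end

section
/- For any positive integer m and complex s with Re(s) > 1, ζ_m(s) · ∑_{n=1}^∞ (1 + e^{2πi/m})^{Ω(n)}/n^s = ζ(s), where ζ_m(s) = ∑_{n=1}^∞ (−e^{2πi/m})^{ω(n)}/n^s. -/
open Real Complex Filter

open scoped ArithmeticFunction ArithmeticFunction.omega ArithmeticFunction.Omega ArithmeticFunction.zeta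

private noncomputable def zmF (z : ℂ) : ArithmeticFunction ℂ :=
  ⟨fun n => if n = 0 then 0 else (-z) ^ (ω n), if_pos rfl⟩

private noncomputable def zmG (z : ℂ) : ArithmeticFunction ℂ :=
  ⟨fun n => if n = 0 then 0 else (1 + z) ^ (Ω n), if_pos rfl⟩

private lemma zmF_apply {z : ℂ} {n : ℕ} (hn : n ≠ 0) : zmF z n = (-z) ^ (ω n) := by
  simp [zmF, hn]

private lemma zmG_apply {z : ℂ} {n : ℕ} (hn : n ≠ 0) : zmG z n = (1 + z) ^ (Ω n) := by
  simp [zmG, hn]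

private lemma omega_mul {a b : ℕ} (ha : a ≠ 0) (hb : b ≠ 0) (hab : Nat.Coprime a b) :
    ω (a * b) = ω a + ω b := by
  simp only [ArithmeticFunction.cardDistinctFactors_apply, ← List.card_toFinset,
    Nat.toFinset_factors]
  rw [hab.primeFactors_mul, Finset.card_union_of_disjoint hab.disjoint_primeFactors]

private lemma zmF_mult (z : ℂ) : (zmF z).IsMultiplicative := by
  rw [ArithmeticFunction.IsMultiplicative.iff_ne_zero]
  refine ⟨by simp [zmF], fun {a b} ha hb hab => ?_⟩
  rw [zmF_apply (Nat.mul_ne_zero ha hb), zmF_apply ha, zmF_apply hb,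
    omega_mul ha hb hab, pow_add]

private lemma zmG_mult (z : ℂ) : (zmG z).IsMultiplicative := by
  rw [ArithmeticFunction.IsMultiplicative.iff_ne_zero]
  refine ⟨by simp [zmG], fun {a b} ha hb hab => ?_⟩
  rw [zmG_apply (Nat.mul_ne_zero ha hb), zmG_apply ha, zmG_apply hb,
    ArithmeticFunction.cardFactors_mul ha hb, pow_add]

private lemma zm_key (z : ℂ) (hz0 : z ≠ 0) :
    zmF z * zmG z = ((ζ : ArithmeticFunction ℕ) : ArithmeticFunction ℂ) := by
  have h1z : (1 + z) ≠ 1 := by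
    intro h
    exact hz0 (by linear_combination h)
  refine (ArithmeticFunction.IsMultiplicative.eq_iff_eq_on_prime_powers _ ((zmF_mult z).mul (zmG_mult z)) _
    ArithmeticFunction.isMultiplicative_zeta.natCast).mpr fun p k hp => ?_
  have hpk : (p : ℕ) ^ k ≠ 0 := pow_ne_zero k hp.pos.ne'
  rw [ArithmeticFunction.mul_apply,
    Nat.sum_divisorsAntidiagonal (fun a b => zmF z a * zmG z b),
    Nat.sum_divisors_prime_pow hp, Finset.sum_range_succ']
  have h0 : zmF z (p ^ 0) * zmG z (p ^ k / p ^ 0) = (1 + z) ^ k := by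
    rw [pow_zero, Nat.div_one, zmF_apply one_ne_zero, zmG_apply hpk]
    simp [ArithmeticFunction.cardFactors_apply_prime_pow hp]
  have hstep : ∀ i ∈ Finset.range k,
      zmF z (p ^ (i + 1)) * zmG z (p ^ k / p ^ (i + 1)) = (-z) * (1 + z) ^ (k - 1 - i) := by
    intro i hi
    have hik : i + 1 ≤ k := Finset.mem_range.mp hi
    rw [Nat.pow_div hik hp.pos, zmF_apply (pow_ne_zero _ hp.pos.ne'),
      zmG_apply (pow_ne_zero _ hp.pos.ne'),
      ArithmeticFunction.cardDistinctFactors_apply_prime_pow hp (Nat.succ_ne_zero i),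
      ArithmeticFunction.cardFactors_apply_prime_pow hp, pow_one]
    congr 2
    omega
  rw [Finset.sum_congr rfl hstep, h0]
  have hre : ∑ i ∈ Finset.range k, (-z) * (1 + z) ^ (k - 1 - i)
      = (-z) * ∑ i ∈ Finset.range k, (1 + z) ^ i := by
    rw [← Finset.mul_sum, Finset.sum_range_reflect (fun i => (1 + z) ^ i) k]
  rw [hre, geom_sum_eq h1z k, ArithmeticFunction.natCoe_apply,
    ArithmeticFunction.zeta_apply, if_neg hpk]
  have : (1 + z) - 1 = z := by ring
  rw [this]
  field_simp
  ring

private lemma tsum_pnat_eq (t : ℕ → ℂ) (h0 : t 0 = 0) :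
    ∑' n : ℕ+, t n = ∑' n : ℕ, t n := by
  refine tsum_subtype_eq_of_support_subset (s := {n : ℕ | 0 < n}) ?_
  intro n hn
  simp only [Set.mem_setOf_eq]
  rcases Nat.eq_zero_or_pos n with rfl | h
  · exact absurd h0 hn
  · exact h

theorem zeta_m_mul_series_eq_zeta (m : ℕ) (hm : 0 < m) (s : ℂ) (hs : 1 < s.re) :
    (∑' n : ℕ+, (-Complex.exp (2 * Real.pi * Complex.I / m)) ^
        (ArithmeticFunction.cardDistinctFactors (n : ℕ)) / ((n : ℕ) : ℂ) ^ s) *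
      (∑' n : ℕ+, (1 + Complex.exp (2 * Real.pi * Complex.I / m)) ^
        (ArithmeticFunction.cardFactors (n : ℕ)) / ((n : ℕ) : ℂ) ^ s)
    = riemannZeta s := by
  set z : ℂ := Complex.exp (2 * Real.pi * Complex.I / m) with hzdef
  have hz0 : z ≠ 0 := Complex.exp_ne_zero _
  have hzabs : ‖z‖ = 1 := by
    rw [hzdef, Complex.norm_exp]
    convert Real.exp_zero using 2
    simp [Complex.div_re]
  have hσ0 : s.re ≠ 0 := by linarith
  have hσpos : (0:ℝ) < s.re := by linarith
  set r : ℝ := ‖1 + z‖ with hrdef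
  have hr0 : 0 ≤ r := norm_nonneg _
  have hr2 : r ≤ 2 := by
    calc r ≤ ‖(1:ℂ)‖ + ‖z‖ := norm_add_le _ _
    _ = 2 := by rw [hzabs, norm_one]; norm_num
  -- the real monoid hom controlling the norms of the G-series
  set G₀ : ℕ →* ℝ :=
    { toFun := fun n => r ^ (Ω n) * (n : ℝ) ^ (-s.re)
      map_one' := by simp
      map_mul' := by
        intro a b
        rcases eq_or_ne a 0 with rfl | ha
        · simp [Real.zero_rpow (neg_ne_zero.mpr hσ0)]
        rcases eq_or_ne b 0 with rfl | hb
        · simp [Real.zero_rpow (neg_ne_zero.mpr hσ0)]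
        · show r ^ (Ω (a * b)) * ((a * b : ℕ) : ℝ) ^ (-s.re) = r ^ (Ω a) * (a : ℝ) ^ (-s.re) * (r ^ (Ω b) * (b : ℝ) ^ (-s.re))
          rw [ArithmeticFunction.cardFactors_mul ha hb, pow_add, Nat.cast_mul,
            Real.mul_rpow (Nat.cast_nonneg a) (Nat.cast_nonneg b)]
          ring } with hG₀def
  have hG₀app : ∀ n : ℕ, G₀ n = r ^ (Ω n) * (n : ℝ) ^ (-s.re) := fun n => rfl
  have hG₀nonneg : ∀ n : ℕ, 0 ≤ G₀ n := by
    intro n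
    rw [hG₀app]
    positivity
  have hple : ∀ {p : ℕ}, p.Prime → G₀ p ≤ 2 * ((2:ℝ) ^ s.re)⁻¹ := by
    intro p hp
    rw [hG₀app, ArithmeticFunction.cardFactors_apply_prime hp, pow_one,
      Real.rpow_neg (Nat.cast_nonneg p)]
    have h2p : (2:ℝ) ^ s.re ≤ (p:ℝ) ^ s.re :=
      Real.rpow_le_rpow (by norm_num) (by exact_mod_cast hp.two_le) hσpos.le
    have hp2pos : (0:ℝ) < (2:ℝ) ^ s.re := Real.rpow_pos_of_pos (by norm_num) _
    have := inv_anti₀ hp2pos h2p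
    calc r * ((p:ℝ) ^ s.re)⁻¹ ≤ 2 * ((p:ℝ) ^ s.re)⁻¹ := by
          apply mul_le_mul_of_nonneg_right hr2
          positivity
      _ ≤ 2 * ((2:ℝ) ^ s.re)⁻¹ := by nlinarith
  set q : ℝ := 2 * ((2:ℝ) ^ s.re)⁻¹ with hqdef
  have hq0 : 0 ≤ q := by positivity
  have hq1 : q < 1 := by
    have h22 : (2:ℝ) < (2:ℝ) ^ s.re := by
      calc (2:ℝ) = (2:ℝ) ^ (1:ℝ) := (Real.rpow_one 2).symm
      _ < (2:ℝ) ^ s.re := Real.rpow_lt_rpow_of_exponent_lt (by norm_num) hs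
    have hp2pos : (0:ℝ) < (2:ℝ) ^ s.re := Real.rpow_pos_of_pos (by norm_num) _
    calc q = 2 / (2:ℝ) ^ s.re := by rw [hqdef, div_eq_mul_inv]
    _ < 1 := (div_lt_one hp2pos).mpr h22
  have hlt : ∀ {p : ℕ}, p.Prime → ‖G₀ p‖ < 1 := by
    intro p hp
    rw [Real.norm_eq_abs, _root_.abs_of_nonneg (hG₀nonneg p)]
    exact lt_of_le_of_lt (hple hp) hq1
  set c : ℝ := (1 - q)⁻¹ with hcdef
  have h1q : (0:ℝ) < 1 - q := by linarith
  have hc0 : 0 ≤ c := by positivity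
  -- the uniform product bound
  have hfactor : ∀ {p : ℕ}, p.Prime → (1 - G₀ p)⁻¹ ≤ Real.exp (c * G₀ p) := by
    intro p hp
    have hxq : G₀ p ≤ q := hple hp
    have hx0 : 0 ≤ G₀ p := hG₀nonneg p
    have h1x : (0:ℝ) < 1 - G₀ p := by linarith
    have hcx : 1 ≤ c * (1 - G₀ p) := by
      have h1 : c * (1 - q) = 1 := inv_mul_cancel₀ h1q.ne'
      nlinarith [mul_le_mul_of_nonneg_left (show (1:ℝ) - q ≤ 1 - G₀ p by linarith) hc0]
    have h2 : 1 ≤ (1 + c * G₀ p) * (1 - G₀ p) := by nlinarith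
    calc (1 - G₀ p)⁻¹ ≤ 1 + c * G₀ p := by
          rw [← one_div, div_le_iff₀ h1x]
          linarith
      _ ≤ Real.exp (c * G₀ p) := by
          have := Real.add_one_le_exp (c * G₀ p)
          linarith
  have hTsum : Summable (fun n : ℕ => 2 * (((n:ℝ) ^ s.re)⁻¹)) :=
    (Real.summable_nat_rpow_inv.mpr hs).mul_left 2
  set T : ℝ := ∑' n : ℕ, 2 * (((n:ℝ) ^ s.re)⁻¹) with hTdef
  -- summability of G₀
  have hsumG₀ : Summable (fun n : ℕ => G₀ n) := by
    refine summable_of_sum_range_le (c := Real.exp (c * T)) hG₀nonneg fun N => ?_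
    obtain ⟨-, hs2⟩ :=
      EulerProduct.summable_and_hasSum_smoothNumbers_prod_primesBelow_geometric
        (f := G₀) hlt N
    have hind : HasSum (Set.indicator N.smoothNumbers (fun n => G₀ n))
        (∏ p ∈ N.primesBelow, (1 - G₀ p)⁻¹) := by
      rwa [← hasSum_subtype_iff_indicator]
    have hle1 : ∑ i ∈ Finset.range N, G₀ i ≤ ∏ p ∈ N.primesBelow, (1 - G₀ p)⁻¹ := by
      have heq : ∑ i ∈ Finset.range N, G₀ i
          = ∑ i ∈ Finset.range N, Set.indicator N.smoothNumbers (fun n => G₀ n) i := by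
        refine Finset.sum_congr rfl fun i hi => ?_
        rcases eq_or_ne i 0 with rfl | h0
        · rw [Set.indicator_of_notMem (fun hmem => (Nat.mem_smoothNumbers.mp hmem).1 rfl)]
          rw [hG₀app]
          simp [Real.zero_rpow (neg_ne_zero.mpr hσ0)]
        · rw [Set.indicator_of_mem
            (Nat.mem_smoothNumbers_of_lt (Nat.pos_of_ne_zero h0) (Finset.mem_range.mp hi))]
      rw [heq]
      exact sum_le_hasSum (Finset.range N)
        (fun i _ => Set.indicator_nonneg (fun j _ => hG₀nonneg j) i) hind
    refine hle1.trans ?_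
    have hprodle : ∏ p ∈ N.primesBelow, (1 - G₀ p)⁻¹
        ≤ ∏ p ∈ N.primesBelow, Real.exp (c * G₀ p) := by
      refine Finset.prod_le_prod (fun p hp => ?_) (fun p hp => ?_)
      · have hxq : G₀ p ≤ q := hple (Nat.prime_of_mem_primesBelow hp)
        have : (0:ℝ) < 1 - G₀ p := by linarith
        positivity
      · exact hfactor (Nat.prime_of_mem_primesBelow hp)
    refine hprodle.trans ?_
    rw [← Real.exp_sum]
    apply Real.exp_le_exp.mpr
    rw [← Finset.mul_sum]
    apply mul_le_mul_of_nonneg_left ?_ hc0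
    calc ∑ p ∈ N.primesBelow, G₀ p
        ≤ ∑ p ∈ N.primesBelow, 2 * (((p:ℝ) ^ s.re)⁻¹) := by
          refine Finset.sum_le_sum fun p hp => ?_
          have hpp := Nat.prime_of_mem_primesBelow hp
          rw [hG₀app, ArithmeticFunction.cardFactors_apply_prime hpp, pow_one,
            Real.rpow_neg (Nat.cast_nonneg p)]
          apply mul_le_mul_of_nonneg_right hr2
          positivity
      _ ≤ T := Summable.sum_le_tsum _ (fun i _ => by positivity) hTsum
  -- summability of the two L-series
  have hF : LSeriesSummable (⇑(zmF z)) s := by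
    refine LSeriesSummable_of_bounded_of_one_lt_re (m := 1) (fun n hn => ?_) hs
    rw [zmF_apply hn, norm_pow, norm_neg, hzabs, one_pow]
  have hGnormeq : (fun n : ℕ => ‖LSeries.term (⇑(zmG z)) s n‖) = fun n : ℕ => G₀ n := by
    funext n
    rcases eq_or_ne n 0 with rfl | hn
    · rw [LSeries.term_zero, norm_zero, hG₀app]
      simp [Real.zero_rpow (neg_ne_zero.mpr hσ0)]
    · rw [LSeries.term_of_ne_zero hn, zmG_apply hn, norm_div, norm_pow,
        Complex.norm_natCast_cpow_of_pos (Nat.pos_of_ne_zero hn), hG₀app,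
        Real.rpow_neg (Nat.cast_nonneg n), ← hrdef, div_eq_mul_inv]
  have hG : LSeriesSummable (⇑(zmG z)) s := by
    refine Summable.of_norm ?_
    rw [hGnormeq]
    exact hsumG₀
  -- identify the two tsums with L-series
  have h1 : (∑' n : ℕ+, (-z) ^ (ω (n : ℕ)) / ((n : ℕ) : ℂ) ^ s)
      = LSeries (⇑(zmF z)) s := by
    rw [LSeries, ← tsum_pnat_eq _ (LSeries.term_zero _ _)]
    refine tsum_congr fun n => ?_
    rw [LSeries.term_of_ne_zero n.pos.ne' , zmF_apply n.pos.ne']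
  have h2 : (∑' n : ℕ+, (1 + z) ^ (Ω (n : ℕ)) / ((n : ℕ) : ℂ) ^ s)
      = LSeries (⇑(zmG z)) s := by
    rw [LSeries, ← tsum_pnat_eq _ (LSeries.term_zero _ _)]
    refine tsum_congr fun n => ?_
    rw [LSeries.term_of_ne_zero n.pos.ne' , zmG_apply n.pos.ne']
  rw [h1, h2, ← ArithmeticFunction.LSeries_mul' hF hG, zm_key z hz0]
  have hcoe : ⇑((ζ : ArithmeticFunction ℕ) : ArithmeticFunction ℂ)
      = fun n : ℕ => ((ζ n : ℕ) : ℂ) :=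
    funext fun n => ArithmeticFunction.natCoe_apply
  rw [hcoe]
  exact ArithmeticFunction.LSeries_zeta_eq_riemannZeta hs
end

section
/- For Re(s) > 1, ∑_{n=1}^∞ (−1)^{n−Ω(n)}/n^s = −(1 + 2^{1−s}) · ζ(2s)/ζ(s). -/
open Complex
open scoped ArithmeticFunction.Omega ArithmeticFunction.zeta

open ArithmeticFunction in
private noncomputable def lamAF : ArithmeticFunction ℂ :=
  ⟨fun n => if n = 0 then 0 else (-1) ^ (Ω n), by simp⟩

open ArithmeticFunction in
private lemma lamAF_def (n : ℕ) : lamAF n = if n = 0 then 0 else (-1) ^ (Ω n) := rfl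

open ArithmeticFunction in
private lemma lamAF_apply {n : ℕ} (hn : n ≠ 0) : lamAF n = (-1) ^ (Ω n) := by
  rw [lamAF_def, if_neg hn]

private lemma cpow_ne_zero' (x : ℂ) (hx : x ≠ 0) (s : ℂ) : x ^ s ≠ 0 := by
  rw [Complex.cpow_def_of_ne_zero hx]; exact Complex.exp_ne_zero _

open ArithmeticFunction in
private lemma lamAF_mult : IsMultiplicative lamAF := by
  constructor
  · simp [lamAF_apply one_ne_zero]
  · intro m n h
    rcases eq_or_ne m 0 with rfl | hm
    · rcases (Nat.coprime_zero_left n).mp h with rfl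
      simp [lamAF_def]
    rcases eq_or_ne n 0 with rfl | hn
    · rcases (Nat.coprime_zero_right m).mp h with rfl
      simp [lamAF_def]
    rw [lamAF_apply (Nat.mul_ne_zero hm hn), lamAF_apply hm, lamAF_apply hn,
      cardFactors_mul hm hn, pow_add]

open ArithmeticFunction in
private noncomputable def sqAF : ArithmeticFunction ℂ :=
  ⟨fun n => if IsSquare n ∧ n ≠ 0 then 1 else 0, by simp⟩

private lemma sqAF_apply {n : ℕ} : sqAF n = if IsSquare n ∧ n ≠ 0 then 1 else 0 := rfl

private lemma isSquare_mul_of_coprime {m n : ℕ} (h : Nat.Coprime m n) :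
    IsSquare (m * n) ↔ IsSquare m ∧ IsSquare n := by
  constructor
  · rintro ⟨c, hc⟩
    have hc2 : m * n = c ^ 2 := by rw [hc, sq]
    have hu : IsUnit (gcd m n) := by
      rw [Nat.isUnit_iff]
      exact h
    constructor
    · obtain ⟨d, hd⟩ := exists_eq_pow_of_mul_eq_pow hu hc2
      exact ⟨d, by rw [hd, sq]⟩
    · obtain ⟨d, hd⟩ := exists_eq_pow_of_mul_eq_pow (b := m)
        (by rwa [gcd_comm]) (by rwa [mul_comm])
      exact ⟨d, by rw [hd, sq]⟩
  · rintro ⟨⟨a, ha⟩, ⟨b, hb⟩⟩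
    exact ⟨a * b, by rw [ha, hb]; ring⟩

open ArithmeticFunction in
private lemma sqAF_mult : IsMultiplicative sqAF := by
  constructor
  · simp [sqAF_apply, IsSquare.one]
  · intro m n h
    rcases eq_or_ne m 0 with rfl | hm
    · rcases (Nat.coprime_zero_left n).mp h with rfl
      simp [sqAF_apply, IsSquare.one]
    rcases eq_or_ne n 0 with rfl | hn
    · rcases (Nat.coprime_zero_right m).mp h with rfl
      simp [sqAF_apply, IsSquare.one]
    simp only [sqAF_apply]
    by_cases h1 : IsSquare m <;> by_cases h2 : IsSquare n <;>
      simp [isSquare_mul_of_coprime h, h1, h2, hm, hn, Nat.mul_ne_zero hm hn]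

private lemma isSquare_prime_pow_iff {p k : ℕ} (hp : p.Prime) :
    IsSquare (p ^ k) ↔ Even k := by
  constructor
  · rintro ⟨r, hr⟩
    have hr2 : p ^ k = r ^ 2 := by rw [hr, sq]
    have := congrArg (fun n => n.factorization p) hr2
    simp only [Nat.Prime.factorization_pow hp, Nat.factorization_pow,
      Finsupp.single_eq_same, Finsupp.smul_apply, smul_eq_mul] at this
    exact this ▸ even_two_mul _
  · rintro ⟨j, rfl⟩
    exact ⟨p ^ j, by rw [← pow_add]⟩

open ArithmeticFunction in
private lemma lamAF_mul_zeta : lamAF * (ζ : ArithmeticFunction ℂ) = sqAF := by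
  rw [IsMultiplicative.eq_iff_eq_on_prime_powers _
    (lamAF_mult.mul isMultiplicative_zeta.natCast) _ sqAF_mult]
  intro p k hp
  rw [coe_mul_zeta_apply, Nat.sum_divisors_prime_pow hp]
  have : ∀ i, lamAF (p ^ i) = (-1 : ℂ) ^ i := fun i => by
    rw [lamAF_apply (pow_ne_zero _ hp.pos.ne'), cardFactors_apply_prime_pow hp]
  simp only [this]
  rw [neg_one_geom_sum, sqAF_apply]
  have hpk : p ^ k ≠ 0 := pow_ne_zero _ hp.pos.ne'
  rcases Nat.even_or_odd k with he | ho
  · simp [isSquare_prime_pow_iff hp, he, Nat.even_add_one, hpk, hp.ne_zero]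
  · simp [isSquare_prime_pow_iff hp, Nat.not_even_iff_odd.mpr ho, Nat.even_add_one, hpk]

open ArithmeticFunction in
private lemma lamAF_summable {s : ℂ} (hs : 1 < s.re) : LSeriesSummable (fun n => lamAF n) s := by
  apply LSeriesSummable_of_bounded_of_one_lt_re (m := 1) _ hs
  intro n hn
  rw [lamAF_apply hn]
  simp

open ArithmeticFunction in
private lemma LSeries_sqAF {s : ℂ} (hs : 1 < s.re) :
    LSeries (fun n => sqAF n) s = riemannZeta (2 * s) := by
  have h2s : 1 < (2 * s).re := by
    rw [mul_re]; simp only [re_ofNat, im_ofNat]; nlinarith [s.re, hs]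
  have h2s0 : (2 : ℂ) * s ≠ 0 := by
    intro h; rw [h] at h2s; norm_num at h2s
  rw [zeta_eq_tsum_one_div_nat_cpow h2s, LSeries]
  have hinj : Function.Injective (fun m : ℕ => m ^ 2) := fun a b h =>
    Nat.pow_left_injective two_ne_zero h
  rw [← hinj.tsum_eq ?side]
  case side =>
    intro n hn
    rcases eq_or_ne n 0 with rfl | h0
    · simp [LSeries.term_zero] at hn
    have hval : sqAF n ≠ 0 := by
      intro h
      apply hn
      simp [LSeries.term_def, h0, h]
    rw [sqAF_apply] at hval
    rcases em (IsSquare n ∧ n ≠ 0) with ⟨⟨r, hr⟩, -⟩ | hh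
    · exact ⟨r, by simp [hr, sq]⟩
    · simp [hh] at hval
  refine tsum_congr fun m => ?_
  rcases eq_or_ne m 0 with rfl | hm
  · simp [LSeries.term_zero, zero_cpow h2s0]
  · have hm2 : (m : ℕ) ^ 2 ≠ 0 := pow_ne_zero _ hm
    rw [LSeries.term_of_ne_zero hm2, sqAF_apply]
    have hsq : IsSquare (m ^ 2) := ⟨m, sq m⟩
    rw [if_pos ⟨hsq, hm2⟩, Nat.cast_pow]
    rw [Complex.cpow_ofNat_mul' (x := (m : ℂ)) (n := 2) ?hlt ?hle]
    case hlt => rw [Complex.natCast_arg]; simpa using Real.pi_pos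
    case hle => rw [Complex.natCast_arg]; simpa using Real.pi_nonneg

open ArithmeticFunction in
private lemma LSeries_lamAF {s : ℂ} (hs : 1 < s.re) :
    LSeries (fun n => lamAF n) s = riemannZeta (2 * s) / riemannZeta s := by
  have hζ : riemannZeta s ≠ 0 := riemannZeta_ne_zero_of_one_lt_re hs
  have hz : LSeriesSummable (fun n => ((ζ : ArithmeticFunction ℂ) n)) s := by
    have := (LSeriesSummable_zeta_iff (s := s)).mpr hs
    apply this.congr
    intro n
    simp [natCoe_apply]
  have key := LSeries_mul' (f := lamAF) (g := (ζ : ArithmeticFunction ℂ))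
    (lamAF_summable hs) hz
  rw [lamAF_mul_zeta] at key
  have hz' : LSeries (fun n => ((ζ : ArithmeticFunction ℂ) n)) s = riemannZeta s := by
    rw [← LSeries_zeta_eq_riemannZeta hs]
    apply LSeries_congr
    intro n _
    simp [natCoe_apply]
  rw [LSeries_sqAF hs, hz'] at key
  field_simp [key]
  exact key.symm

open ArithmeticFunction in
theorem dirichlet_series_identity (s : ℂ) (hs : 1 < s.re) :
    ∑' n : ℕ+, (-1 : ℂ) ^ (((n : ℕ) : ℤ) - (ArithmeticFunction.cardFactors (n : ℕ) : ℤ)) /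
        ((n : ℕ) : ℂ) ^ s
      = -(1 + (2 : ℂ) ^ (1 - s)) * (riemannZeta (2 * s) / riemannZeta s) := by
  set L : ℂ := riemannZeta (2 * s) / riemannZeta s with hL
  set F : ℕ → ℂ := fun n => LSeries.term (fun n => lamAF n) s n with hF
  have hFsum : Summable F := lamAF_summable hs
  have hFval : ∀ n : ℕ, n ≠ 0 → F n = (-1) ^ (Ω n) / (n : ℂ) ^ s := fun n hn => by
    rw [hF]; simp only [LSeries.term_of_ne_zero hn, lamAF_apply hn]
  have hFzero : F 0 = 0 := by rw [hF]; simp only [LSeries.term_zero]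
  -- step 1: LHS = ∑' n : ℕ, (-1)^n * F n
  have step1 : ∑' n : ℕ+,
      (-1 : ℂ) ^ (((n : ℕ) : ℤ) - (ArithmeticFunction.cardFactors (n : ℕ) : ℤ)) /
        ((n : ℕ) : ℂ) ^ s = ∑' n : ℕ, (-1 : ℂ) ^ n * F n := by
    rw [← (PNat.coe_injective).tsum_eq (f := fun n : ℕ => (-1 : ℂ) ^ n * F n) ?supp]
    case supp =>
      intro n hn
      rcases eq_or_ne n 0 with rfl | h0
      · simp [hFzero] at hn
      · exact ⟨⟨n, Nat.pos_of_ne_zero h0⟩, rfl⟩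
    refine tsum_congr fun n => ?_
    have hn : (n : ℕ) ≠ 0 := n.pos.ne'
    rw [hFval n hn]
    rw [zpow_sub₀ (by norm_num : (-1 : ℂ) ≠ 0), zpow_natCast, zpow_natCast]
    have hb : ((-1 : ℂ) ^ (Ω (n : ℕ)))⁻¹ = (-1 : ℂ) ^ (Ω (n : ℕ)) := by
      rw [← inv_pow]; norm_num
    simp only [div_eq_mul_inv]
    rw [hb]
    ring
  -- step 2: split
  have hG : ∀ n : ℕ, (-1 : ℂ) ^ n * F n = 2 * (if 2 ∣ n then F n else 0) - F n := by
    intro n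
    rcases Nat.even_or_odd n with he | ho
    · rw [if_pos he.two_dvd, Even.neg_one_pow he]; ring
    · rw [if_neg (fun h => (Nat.not_even_iff_odd.mpr ho) ((even_iff_two_dvd).mpr h)),
        Odd.neg_one_pow ho]; ring
  have hIndSum : Summable (fun n : ℕ => if 2 ∣ n then F n else 0) := by
    apply Summable.of_norm_bounded hFsum.norm
    intro n
    by_cases h : 2 ∣ n <;> simp [h]
  have step2 : ∑' n : ℕ, (-1 : ℂ) ^ n * F n
      = 2 * (∑' n : ℕ, if 2 ∣ n then F n else 0) - ∑' n, F n := by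
    rw [← tsum_mul_left, ← Summable.tsum_sub (hIndSum.mul_left 2) hFsum]
    exact tsum_congr fun n => hG n
  -- step 3: even part
  have hdbl : Function.Injective (fun m : ℕ => 2 * m) := by
    intro a b h
    dsimp only at h
    omega
  have h2pow : (2 : ℂ) ^ s ≠ 0 := cpow_ne_zero' 2 (by norm_num) s
  have step3 : (∑' n : ℕ, if 2 ∣ n then F n else 0) = -(2 : ℂ) ^ (-s) * ∑' n, F n := by
    rw [← hdbl.tsum_eq (f := fun n : ℕ => if 2 ∣ n then F n else 0) ?supp]
    case supp =>
      intro n hn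
      have h2 : 2 ∣ n := by
        by_contra h
        simp only [Function.mem_support, if_neg h, ne_eq, not_true_eq_false] at hn
      obtain ⟨m, rfl⟩ := h2
      exact ⟨m, rfl⟩
    rw [← tsum_mul_left]
    refine tsum_congr fun m => ?_
    simp only [dvd_mul_right, if_true]
    rcases eq_or_ne m 0 with rfl | hm
    · simp [hFzero]
    have h2m : 2 * m ≠ 0 := by omega
    have hmpow : ((m : ℕ) : ℂ) ^ s ≠ 0 :=
      cpow_ne_zero' _ (Nat.cast_ne_zero.mpr hm) s
    rw [hFval _ h2m, hFval _ hm]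
    rw [cardFactors_mul two_ne_zero hm, cardFactors_apply_prime Nat.prime_two]
    have hcast : ((2 * m : ℕ) : ℂ) ^ s = (2 : ℂ) ^ s * (m : ℂ) ^ s := by
      push_cast
      rw [show ((2 : ℂ)) = ((2 : ℝ) : ℂ) by norm_num,
        show ((m : ℂ)) = ((m : ℝ) : ℂ) by norm_num,
        ← mul_cpow_ofReal_nonneg (by norm_num) (Nat.cast_nonneg m)]
      try norm_num
    rw [hcast, pow_add, pow_one, Complex.cpow_neg]
    field_simp
  -- assemble
  have hLS : ∑' n, F n = L := LSeries_lamAF hs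
  rw [step1, step2, step3, hLS]
  have hpow : (2 : ℂ) ^ (1 - s) = 2 * (2 : ℂ) ^ (-s) := by
    rw [sub_eq_add_neg, Complex.cpow_add _ _ (by norm_num : (2:ℂ) ≠ 0), Complex.cpow_one]
  rw [hpow]
  ring
end

section
/- If ∑_{n ≤ x} (−1)^{Ω(n)} = o(x) as x → ∞, then ∑_{n ≤ x} (−1)^{n−Ω(n)} = o(x) as x → ∞. -/
open Finset Filter

private lemma neg_one_zpow_sub' (a b : ℕ) :
    (-1 : ℝ) ^ ((a : ℤ) - (b : ℤ)) = (-1) ^ a * (-1) ^ b := by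
  rw [zpow_sub₀ (by norm_num : (-1:ℝ) ≠ 0), zpow_natCast, zpow_natCast, div_eq_mul_inv]
  congr 1
  rcases Nat.even_or_odd b with hb | hb
  · rw [hb.neg_one_pow]; norm_num
  · rw [hb.neg_one_pow]; norm_num

private lemma key' (N : ℕ) :
    ∑ n ∈ Icc 1 N, (-1:ℝ) ^ ((n:ℤ) - (ArithmeticFunction.cardFactors n : ℤ)) =
      -∑ n ∈ Icc 1 N, (-1:ℝ) ^ (ArithmeticFunction.cardFactors n)
        - 2 * ∑ m ∈ Icc 1 (N/2), (-1:ℝ) ^ (ArithmeticFunction.cardFactors m) := by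
  induction N with
  | zero => simp
  | succ N ih =>
    rw [Finset.sum_Icc_succ_top (Nat.succ_le_succ (Nat.zero_le N))]
    rcases Nat.even_or_odd (N+1) with he | ho
    · obtain ⟨m, hm⟩ := he
      have hm2 : m + m = 2 * m := by ring
      have hmpos : 1 ≤ m := by omega
      have hdiv : (N+1)/2 = N/2 + 1 := by omega
      have hΩ : ArithmeticFunction.cardFactors (N+1) =
          ArithmeticFunction.cardFactors m + 1 := by
        rw [hm, hm2, ArithmeticFunction.cardFactors_mul (by norm_num) (by omega),
          ArithmeticFunction.cardFactors_apply_prime Nat.prime_two]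
        omega
      rw [hdiv, Finset.sum_Icc_succ_top (Nat.succ_le_succ (Nat.zero_le (N/2))),
        Finset.sum_Icc_succ_top (Nat.succ_le_succ (Nat.zero_le N)), ih, neg_one_zpow_sub', hΩ]
      have hmN : N/2 + 1 = m := by omega
      rw [hmN, hm, hm2]
      rw [pow_succ, pow_mul]
      ring_nf
    · obtain ⟨k, hk⟩ := ho
      have hdiv : (N+1)/2 = N/2 := by omega
      have hp : (-1:ℝ) ^ (N+1) = -1 := Odd.neg_one_pow ⟨k, hk⟩
      rw [hdiv, Finset.sum_Icc_succ_top (Nat.succ_le_succ (Nat.zero_le N)), ih,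
        neg_one_zpow_sub', hp]
      ring

theorem S_little_o (h : Filter.Tendsto
      (fun x : ℝ => (∑ n ∈ Finset.Icc 1 ⌊x⌋₊,
        (-1 : ℝ) ^ (ArithmeticFunction.cardFactors n)) / x) Filter.atTop (nhds 0)) :
    Filter.Tendsto
      (fun x : ℝ => (∑ n ∈ Finset.Icc 1 ⌊x⌋₊,
        (-1 : ℝ) ^ ((n : ℤ) - (ArithmeticFunction.cardFactors n : ℤ))) / x)
      Filter.atTop (nhds 0) := by
  set f : ℝ → ℝ := fun x =>
    (∑ n ∈ Finset.Icc 1 ⌊x⌋₊, (-1 : ℝ) ^ (ArithmeticFunction.cardFactors n)) / x with hf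
  have hhalf : Tendsto (fun x : ℝ => x / 2) atTop atTop :=
    tendsto_id.atTop_div_const two_pos
  have h2 : Tendsto (fun x : ℝ => f (x / 2)) atTop (nhds 0) := h.comp hhalf
  have hcomb : Tendsto (fun x : ℝ => -f x - f (x / 2)) atTop (nhds 0) := by
    have := (h.neg).sub h2
    simpa using this
  refine hcomb.congr' ?_
  filter_upwards [eventually_gt_atTop (0:ℝ)] with x hx
  have hfloor : ⌊x⌋₊ / 2 = ⌊x / 2⌋₊ := (Nat.floor_div_ofNat x 2).symm
  have hxne : x ≠ 0 := ne_of_gt hx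
  rw [hf]
  simp only
  rw [key' ⌊x⌋₊, hfloor]
  field_simp
end

section
/- If ∑_{n ≤ x} λ(n)/n → 0 as x → ∞ (Landau's theorem), then ∑_{n=1}^∞ (−1)^{n−Ω(n)}/n = 0, i.e., the partial sums ∑_{n ≤ x} (−1)^{n−Ω(n)}/n tend to 0. -/
open Finset Filter

private lemma key_sum (N : ℕ) :
    ∑ n ∈ Finset.Icc 1 N,
        (-1 : ℝ) ^ ((n : ℤ) - (ArithmeticFunction.cardFactors n : ℤ)) / n
      = -(∑ n ∈ Finset.Icc 1 (N / 2),
            (-1 : ℝ) ^ (ArithmeticFunction.cardFactors n) / n)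
        - ∑ n ∈ Finset.Icc 1 N, (-1 : ℝ) ^ (ArithmeticFunction.cardFactors n) / n := by
  have hsplit : ∀ n ∈ Finset.Icc 1 N,
      (-1 : ℝ) ^ ((n : ℤ) - (ArithmeticFunction.cardFactors n : ℤ)) / n
        = ((-1 : ℝ) ^ n * (-1 : ℝ) ^ (ArithmeticFunction.cardFactors n)) / n := by
    intro n _
    congr 1
    rw [zpow_sub₀ (by norm_num : (-1:ℝ) ≠ 0), zpow_natCast, zpow_natCast]
    rw [div_eq_mul_inv]
    congr 1
    exact inv_eq_of_mul_eq_one_right (by rw [← pow_add]; exact Even.neg_one_pow ⟨_, rfl⟩)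
  rw [Finset.sum_congr rfl hsplit]
  have hpair : ∀ n ∈ Finset.Icc 1 N,
      ((-1 : ℝ) ^ n * (-1 : ℝ) ^ (ArithmeticFunction.cardFactors n)) / n
        = (if 2 ∣ n then 2 * ((-1 : ℝ) ^ (ArithmeticFunction.cardFactors n) / n) else 0)
          - (-1 : ℝ) ^ (ArithmeticFunction.cardFactors n) / n := by
    intro n _
    by_cases hn : 2 ∣ n
    · rw [if_pos hn, Even.neg_one_pow ((even_iff_two_dvd).2 hn)]
      ring
    · rw [if_neg hn, Odd.neg_one_pow (Nat.odd_iff.2 (Nat.two_dvd_ne_zero.1 hn))]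
      ring
  rw [Finset.sum_congr rfl hpair, Finset.sum_sub_distrib]
  congr 1
  rw [← Finset.sum_filter, ← Finset.mul_sum]
  have hbij : ∑ n ∈ (Finset.Icc 1 N).filter (fun n => 2 ∣ n),
      (-1 : ℝ) ^ (ArithmeticFunction.cardFactors n) / n
      = ∑ m ∈ Finset.Icc 1 (N / 2),
          -((-1 : ℝ) ^ (ArithmeticFunction.cardFactors m) / m) / 2 := by
    refine Finset.sum_nbij' (fun n => n / 2) (fun m => 2 * m) ?_ ?_ ?_ ?_ ?_
    · intro a ha
      simp only [Finset.mem_filter, Finset.mem_Icc] at ha ⊢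
      obtain ⟨⟨h1, h2⟩, hd⟩ := ha
      exact ⟨Nat.one_le_div_iff (by norm_num) |>.2 (hd.elim (fun c hc => by omega)),
        Nat.div_le_div_right h2⟩
    · intro a ha
      simp only [Finset.mem_Icc] at ha
      simp only [Finset.mem_filter, Finset.mem_Icc]
      refine ⟨⟨by omega, ?_⟩, ⟨a, rfl⟩⟩
      have := (Nat.le_div_iff_mul_le (by norm_num : 0 < 2)).1 ha.2
      omega
    · intro a ha
      simp only [Finset.mem_filter] at ha
      obtain ⟨c, rfl⟩ := ha.2
      omega
    · intro a _; omega
    · intro a ha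
      simp only [Finset.mem_filter, Finset.mem_Icc] at ha
      obtain ⟨⟨h1, h2⟩, c, rfl⟩ := ha
      have hc : c ≠ 0 := by omega
      rw [Nat.mul_div_cancel_left c (by norm_num)]
      rw [ArithmeticFunction.cardFactors_mul (by norm_num) hc, pow_add,
        ArithmeticFunction.cardFactors_apply_prime Nat.prime_two]
      push_cast
      field_simp
  rw [hbij, ← Finset.sum_div, ← Finset.sum_neg_distrib]
  ring


theorem T_tendsto_zero
    (h : Filter.Tendsto
      (fun x : ℝ => ∑ n ∈ Finset.Icc 1 ⌊x⌋₊,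
        (-1 : ℝ) ^ (ArithmeticFunction.cardFactors n) / n) Filter.atTop (nhds 0)) :
    Filter.Tendsto
      (fun x : ℝ => ∑ n ∈ Finset.Icc 1 ⌊x⌋₊,
        (-1 : ℝ) ^ ((n : ℤ) - (ArithmeticFunction.cardFactors n : ℤ)) / n)
      Filter.atTop (nhds 0) := by
  have hhalf : Filter.Tendsto
      (fun x : ℝ => ∑ n ∈ Finset.Icc 1 (⌊x⌋₊ / 2),
        (-1 : ℝ) ^ (ArithmeticFunction.cardFactors n) / n) Filter.atTop (nhds 0) := by
    have h2 := h.comp (Filter.tendsto_id.atTop_div_const (by norm_num : (0:ℝ) < 2))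
    simp only [id_eq] at h2
    have heq : ∀ x : ℝ, ⌊x / 2⌋₊ = ⌊x⌋₊ / 2 := fun x => by
      have := Nat.floor_div_natCast x 2
      push_cast at this
      simpa using this
    have : ((fun x : ℝ => ∑ n ∈ Finset.Icc 1 ⌊x⌋₊,
        (-1 : ℝ) ^ (ArithmeticFunction.cardFactors n) / n) ∘ fun x : ℝ => x / 2)
        = fun x : ℝ => ∑ n ∈ Finset.Icc 1 (⌊x⌋₊ / 2),
          (-1 : ℝ) ^ (ArithmeticFunction.cardFactors n) / n := by
      funext x
      simp [Function.comp, heq x]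
    rwa [this] at h2
  have := (hhalf.neg.sub h)
  simp only [neg_zero, sub_zero] at this
  convert this using 2 with x
  exact key_sum ⌊x⌋₊
end

section
/- Abel summation remainder estimate: let a : ℕ → ℂ and A(t) = ∑_{n ≤ t} a(n). Suppose there are complex numbers c, z with z ≠ 0 and Re(z) ≠ 1 such that A(x) = c·x·(log x)^{z−1} + O(x (log x)^{Re(z)−2}) for x ≥ 2. Then for all x ≥ y ≥ 2, ∑_{y < n ≤ x} a(n)/n = (c/z)((log x)^z − (log y)^z) + O((log x)^{Re(z)−1}) + O((log y)^{Re(z)−1}). -/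
open Complex Finset Real MeasureTheory intervalIntegral

lemma aux_hasDerivAt_inv (t : ℝ) (ht : t ≠ 0) :
    HasDerivAt (fun s : ℝ => ((s:ℂ))⁻¹) (-(((t:ℂ))^2)⁻¹) t := by
  have h1 : HasDerivAt (fun s : ℝ => s⁻¹) (-(t^2)⁻¹) t := hasDerivAt_inv ht
  have := h1.ofReal_comp
  convert this using 2 <;> push_cast <;> ring

lemma aux_contOn_cpow (z : ℂ) {x y : ℝ} (hy : 2 ≤ y) :
    ContinuousOn (fun t : ℝ => ((Real.log t : ℂ)) ^ z) (Set.Icc y x) := by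
  apply ContinuousOn.cpow
  · exact Complex.continuous_ofReal.comp_continuousOn (Real.continuousOn_log.mono (by
      intro t ht
      simp only [Set.mem_compl_iff, Set.mem_singleton_iff]
      intro h; rw [h] at ht; simp at ht; linarith [ht.1]))
  · exact continuousOn_const
  · intro t ht
    have h2 : (2:ℝ) ≤ t := le_trans hy ht.1
    have : 0 < Real.log t := Real.log_pos (by linarith)
    simp [Complex.mem_slitPlane_iff, this]

lemma aux_contOn_inv {x y : ℝ} (hy : 2 ≤ y) :
    ContinuousOn (fun t : ℝ => ((t:ℂ))⁻¹) (Set.Icc y x) := by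
  apply ContinuousOn.inv₀
  · exact Complex.continuous_ofReal.continuousOn
  · intro t ht
    exact_mod_cast (by linarith [ht.1] : t ≠ 0)

lemma aux_contOn_g {x y : ℝ} (hy : 2 ≤ y) :
    ContinuousOn (fun t : ℝ => -(((t:ℂ))^2)⁻¹) (Set.Icc y x) := by
  apply ContinuousOn.neg
  apply ContinuousOn.inv₀
  · exact (Complex.continuous_ofReal.pow 2).continuousOn
  · intro t ht
    have : t ≠ 0 := by linarith [ht.1]
    exact pow_ne_zero 2 (by exact_mod_cast this)

lemma aux_cpow_integral (z : ℂ) (hz : z ≠ 0) {x y : ℝ} (hy : 2 ≤ y) (hyx : y ≤ x) :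
    ∫ t in y..x, ((Real.log t : ℂ)) ^ (z-1) * (t:ℂ)⁻¹ =
      (((Real.log x : ℂ))^z - ((Real.log y : ℂ))^z) / z := by
  have key : ∀ t ∈ Set.uIcc y x, HasDerivAt (fun s : ℝ => ((Real.log s : ℂ))^z / z)
      (((Real.log t : ℂ)) ^ (z-1) * (t:ℂ)⁻¹) t := by
    intro t ht
    rw [Set.uIcc_of_le hyx] at ht
    have ht2 : (2:ℝ) ≤ t := le_trans hy ht.1
    have hlt : 0 < Real.log t := Real.log_pos (by linarith)
    have houter : HasDerivAt (fun s : ℝ => ((s:ℂ))^z / z) (((Real.log t : ℂ))^(z-1))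
        (Real.log t) := by
      have := hasDerivAt_ofReal_cpow_const' (x := Real.log t) (ne_of_gt hlt)
        (r := z - 1) (by intro h; apply hz; have := sub_eq_iff_eq_add.mp h; simpa using this)
      simpa [sub_add_cancel] using this
    have hinner : HasDerivAt Real.log t⁻¹ t := Real.hasDerivAt_log (by linarith)
    have := houter.scomp t hinner
    simpa [mul_comm, Complex.real_smul, Function.comp_def] using this
  rw [integral_eq_sub_of_hasDerivAt key]
  · ring
  · exact ((aux_contOn_cpow (z-1) hy).mul (aux_contOn_inv hy)).intervalIntegrable_of_Icc hyx

lemma aux_rpow_integral (q : ℝ) (hq : q ≠ 0) {x y : ℝ} (hy : 2 ≤ y) (hyx : y ≤ x) :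
    ∫ t in y..x, Real.log t ^ (q-1) * t⁻¹ = (Real.log x ^ q - Real.log y ^ q) / q := by
  have key : ∀ t ∈ Set.uIcc y x, HasDerivAt (fun s : ℝ => Real.log s ^ q / q)
      (Real.log t ^ (q-1) * t⁻¹) t := by
    intro t ht
    rw [Set.uIcc_of_le hyx] at ht
    have ht2 : (2:ℝ) ≤ t := le_trans hy ht.1
    have hlt : 0 < Real.log t := Real.log_pos (by linarith)
    have houter : HasDerivAt (fun s : ℝ => s ^ q / q) (Real.log t ^ (q-1)) (Real.log t) := by
      have := (Real.hasDerivAt_rpow_const (x := Real.log t) (p := q)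
        (Or.inl (ne_of_gt hlt))).div_const q
      simpa [mul_div_assoc, mul_div_cancel_left₀ _ hq] using this
    have hinner : HasDerivAt Real.log t⁻¹ t := Real.hasDerivAt_log (by linarith)
    have := houter.comp t hinner
    simpa [mul_comm, Function.comp_def] using this
  rw [integral_eq_sub_of_hasDerivAt key]
  · ring
  · apply ContinuousOn.intervalIntegrable_of_Icc hyx
    apply ContinuousOn.mul
    · apply ContinuousOn.rpow_const
      · exact Real.continuousOn_log.mono (fun t ht => by
          simp only [Set.mem_compl_iff, Set.mem_singleton_iff]
          intro h; rw [h] at ht; simp at ht; linarith [ht.1])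
      · intro t ht
        exact Or.inl (ne_of_gt (Real.log_pos (by linarith [ht.1])))
    · exact ContinuousOn.inv₀ continuousOn_id (fun t ht => by simp; linarith [ht.1])

lemma aux_intOn_rpow (q : ℝ) {x y : ℝ} (hy : 2 ≤ y) (hyx : y ≤ x) :
    IntervalIntegrable (fun t : ℝ => Real.log t ^ q * t⁻¹) volume y x := by
  apply ContinuousOn.intervalIntegrable_of_Icc hyx
  apply ContinuousOn.mul
  · apply ContinuousOn.rpow_const
    · exact Real.continuousOn_log.mono (fun t ht => by
        simp only [Set.mem_compl_iff, Set.mem_singleton_iff]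
        intro h; rw [h] at ht; simp at ht; linarith [ht.1])
    · intro t ht
      exact Or.inl (ne_of_gt (Real.log_pos (by linarith [ht.1])))
  · exact ContinuousOn.inv₀ continuousOn_id (fun t ht => by simp; linarith [ht.1])

theorem abel_summation_remainder (a : ℕ → ℂ) (c z : ℂ) (hz : z ≠ 0) (hz1 : z.re ≠ 1)
    (hA : ∃ C : ℝ, ∀ x : ℝ, 2 ≤ x →
      ‖(∑ n ∈ Finset.Icc 1 ⌊x⌋₊, a n) -
          c * x * (Real.log x : ℂ) ^ (z - 1)‖
        ≤ C * x * Real.log x ^ (z.re - 2)) :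
    ∃ C : ℝ, ∀ x y : ℝ, 2 ≤ y → y ≤ x →
      ‖(∑ n ∈ Finset.Ioc ⌊y⌋₊ ⌊x⌋₊, a n / n) -
          (c / z) * ((Real.log x : ℂ) ^ z - (Real.log y : ℂ) ^ z)‖
        ≤ C * (Real.log x ^ (z.re - 1) + Real.log y ^ (z.re - 1)) := by
  obtain ⟨C₀, hC₀⟩ := hA
  set C₁ := |C₀| with hC₁def
  have hC₁ : ∀ x : ℝ, 2 ≤ x →
      ‖(∑ n ∈ Finset.Icc 1 ⌊x⌋₊, a n) - c * x * (Real.log x : ℂ) ^ (z - 1)‖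
        ≤ C₁ * x * Real.log x ^ (z.re - 2) := by
    intro x hx
    refine (hC₀ x hx).trans ?_
    have h1 : 0 ≤ x * Real.log x ^ (z.re - 2) := by
      apply mul_nonneg (by linarith) (Real.rpow_nonneg (Real.log_nonneg (by linarith)) _)
    rw [mul_assoc, mul_assoc]
    exact mul_le_mul_of_nonneg_right (le_abs_self C₀) h1
  have hC₁0 : 0 ≤ C₁ := abs_nonneg _
  set p := z.re - 1 with hpdef
  have hp0 : p ≠ 0 := sub_ne_zero.mpr hz1
  have hlog2 : 0 < Real.log 2 := Real.log_pos (by norm_num)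
  refine ⟨‖c‖ + C₁ / Real.log 2 + C₁ / |p|, ?_⟩
  intro x y hy hyx
  have hx : (2:ℝ) ≤ x := hy.trans hyx
  have hy0 : (0:ℝ) < y := by linarith
  have hx0 : (0:ℝ) < x := by linarith
  have hly : 0 < Real.log y := Real.log_pos (by linarith)
  have hlx : 0 < Real.log x := Real.log_pos (by linarith)
  have hlyx : Real.log y ≤ Real.log x := Real.log_le_log hy0 hyx
  have hl2y : Real.log 2 ≤ Real.log y := Real.log_le_log (by norm_num) hy
  have hl2x : Real.log 2 ≤ Real.log x := le_trans hl2y hlyx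
  -- abbreviations
  set g : ℝ → ℂ := fun t => -(((t:ℂ))^2)⁻¹ with hgdef
  set M : ℝ → ℂ := fun t => c * t * ((Real.log t : ℂ))^(z-1) with hMdef
  set S : ℝ → ℂ := fun t => ∑ k ∈ Icc 0 ⌊t⌋₊, a k with hSdef
  -- Abel summation
  have hf_diff : ∀ t ∈ Set.Icc y x, DifferentiableAt ℝ (fun s : ℝ => ((s:ℂ))⁻¹) t :=
    fun t ht => (aux_hasDerivAt_inv t (by linarith [ht.1])).differentiableAt
  have hderiv_eq : ∀ t ∈ Set.Icc y x, deriv (fun s : ℝ => ((s:ℂ))⁻¹) t = g t :=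
    fun t ht => (aux_hasDerivAt_inv t (by linarith [ht.1])).deriv
  have hf_int : IntegrableOn (deriv (fun s : ℝ => ((s:ℂ))⁻¹)) (Set.Icc y x) := by
    apply (((aux_contOn_g hy).integrableOn_Icc)).congr_fun (fun t ht => (hderiv_eq t ht).symm)
      measurableSet_Icc
  have habel := sum_mul_eq_sub_sub_integral_mul a (by linarith : (0:ℝ) ≤ y) hyx hf_diff hf_int
  -- rewrite the set integral as an interval integral with explicit integrand
  have hIeq : ∫ t in Set.Ioc y x, deriv (fun s : ℝ => ((s:ℂ))⁻¹) t * S t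
      = ∫ t in y..x, g t * S t := by
    rw [← intervalIntegral.integral_of_le hyx]
    refine intervalIntegral.integral_congr (fun t ht => ?_)
    rw [Set.uIcc_of_le hyx] at ht
    rw [hderiv_eq t ht]
  -- integrability of g * S
  have hgS_int : IntervalIntegrable (fun t => g t * S t) volume y x := by
    rw [intervalIntegrable_iff_integrableOn_Icc_of_le hyx]
    apply Measure.integrableOn_of_bounded (M := (y^2)⁻¹ * ∑ k ∈ Icc 0 ⌊x⌋₊, ‖a k‖)
      measure_Icc_lt_top.ne
    case f_mble =>
      apply Measurable.aestronglyMeasurable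
      have hSm : Measurable S := by
        have : S = (fun n : ℕ => ∑ k ∈ Icc 0 n, a k) ∘ Nat.floor := rfl
        rw [this]
        exact measurable_from_nat.comp Nat.measurable_floor
      exact (((Complex.measurable_ofReal.pow_const 2).inv).neg).mul hSm
    case f_bdd =>
      rw [ae_restrict_iff' measurableSet_Icc]
      refine ae_of_all _ (fun t ht => ?_)
      rw [norm_mul]
      have h1 : ‖g t‖ ≤ (y^2)⁻¹ := by
        have hty : y ≤ t := ht.1
        simp only [hgdef, norm_neg, norm_inv, norm_pow, Complex.norm_real, Real.norm_eq_abs,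
          abs_of_pos (by linarith : (0:ℝ) < t)]
        apply inv_anti₀ (by positivity)
        exact pow_le_pow_left₀ (by linarith) hty 2
      have h2 : ‖S t‖ ≤ ∑ k ∈ Icc 0 ⌊x⌋₊, ‖a k‖ := by
        refine le_trans (norm_sum_le _ _) ?_
        apply Finset.sum_le_sum_of_subset_of_nonneg
        · exact Finset.Icc_subset_Icc le_rfl (Nat.floor_le_floor ht.2)
        · intro k _ _; exact norm_nonneg _
      exact mul_le_mul h1 h2 (norm_nonneg _) (by positivity)
  have hsum0 : ∀ n : ℕ, ∑ k ∈ Icc 0 n, a k = a 0 + ∑ k ∈ Icc 1 n, a k := fun n => by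
    rw [Finset.Icc_eq_cons_Ioc (Nat.zero_le n), Finset.sum_cons, ← Finset.Icc_add_one_left_eq_Ioc, zero_add]
  -- the three pieces
  have h1int : IntervalIntegrable (fun t => g t * a 0) volume y x :=
    ((aux_contOn_g hy).mul continuousOn_const).intervalIntegrable_of_Icc hyx
  have hMcont : ContinuousOn M (Set.Icc y x) := by
    apply ContinuousOn.mul
    · exact continuousOn_const.mul Complex.continuous_ofReal.continuousOn
    · exact aux_contOn_cpow (z-1) hy
  have h2int : IntervalIntegrable (fun t => g t * M t) volume y x :=
    ((aux_contOn_g hy).mul hMcont).intervalIntegrable_of_Icc hyx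
  have h3int : IntervalIntegrable (fun t => g t * (S t - a 0 - M t)) volume y x := by
    have heq : (fun t => g t * (S t - a 0 - M t))
        = fun t => g t * S t - (g t * a 0 + g t * M t) := by funext t; ring
    rw [heq]
    exact hgS_int.sub (h1int.add h2int)
  have hsplit : ∫ t in y..x, g t * S t
      = (∫ t in y..x, g t * a 0) + (∫ t in y..x, g t * M t)
        + ∫ t in y..x, g t * (S t - a 0 - M t) := by
    rw [← intervalIntegral.integral_add h1int h2int,
      ← intervalIntegral.integral_add (h1int.add h2int) h3int]
    refine intervalIntegral.integral_congr (fun t ht => ?_)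
    ring
  -- evaluate piece 1
  have hI1 : ∫ t in y..x, g t * a 0 = (x:ℂ)⁻¹ * a 0 - (y:ℂ)⁻¹ * a 0 := by
    have key : ∀ t ∈ Set.uIcc y x, HasDerivAt (fun s : ℝ => ((s:ℂ))⁻¹ * a 0) (g t * a 0) t := by
      intro t ht
      rw [Set.uIcc_of_le hyx] at ht
      exact (aux_hasDerivAt_inv t (by linarith [ht.1])).mul_const _
    rw [integral_eq_sub_of_hasDerivAt key h1int]
  -- evaluate piece 2
  have hI2 : ∫ t in y..x, g t * M t
      = -c * ((((Real.log x : ℂ))^z - ((Real.log y : ℂ))^z) / z) := by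
    have heq2 : ∫ t in y..x, g t * M t
        = ∫ t in y..x, (-c) * (((Real.log t : ℂ))^(z-1) * (t:ℂ)⁻¹) := by
      refine intervalIntegral.integral_congr (fun t ht => ?_)
      rw [Set.uIcc_of_le hyx] at ht
      have ht0 : ((t:ℂ)) ≠ 0 := by exact_mod_cast (by linarith [ht.1] : t ≠ 0)
      simp only [hgdef, hMdef]
      field_simp
    rw [heq2, intervalIntegral.integral_const_mul, aux_cpow_integral z hz hy hyx]
  -- bound piece 3
  have hI3 : ‖∫ t in y..x, g t * (S t - a 0 - M t)‖
      ≤ C₁ / |p| * (Real.log x ^ p + Real.log y ^ p) := by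
    have hb : ∀ᵐ t ∂volume.restrict (Set.uIoc y x),
        ‖g t * (S t - a 0 - M t)‖ ≤ C₁ * (Real.log t ^ (p-1) * t⁻¹) := by
      rw [Set.uIoc_of_le hyx, ae_restrict_iff' measurableSet_Ioc]
      refine ae_of_all _ (fun t ht => ?_)
      have ht2 : (2:ℝ) ≤ t := le_trans hy (le_of_lt ht.1)
      have ht0 : (0:ℝ) < t := by linarith
      have hEt : ‖S t - a 0 - M t‖ ≤ C₁ * t * Real.log t ^ (z.re - 2) := by
        have hth := hC₁ t ht2
        have h0 : S t - a 0 - M t = (∑ n ∈ Icc 1 ⌊t⌋₊, a n) - M t := by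
          simp only [hSdef]; rw [hsum0 ⌊t⌋₊]; ring
        rw [h0]; exact hth
      rw [norm_mul]
      have hg : ‖g t‖ = (t^2)⁻¹ := by
        simp only [hgdef, norm_neg, norm_inv, norm_pow, Complex.norm_real, Real.norm_eq_abs]
        rw [abs_of_pos ht0]
      rw [hg]
      calc (t^2)⁻¹ * ‖S t - a 0 - M t‖
          ≤ (t^2)⁻¹ * (C₁ * t * Real.log t ^ (z.re-2)) :=
            mul_le_mul_of_nonneg_left hEt (by positivity)
        _ = C₁ * (Real.log t ^ (p-1) * t⁻¹) := by
            have h2p : z.re - 2 = p - 1 := by rw [hpdef]; ring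
            rw [h2p]; field_simp
    have hnb := intervalIntegral.norm_integral_le_abs_of_norm_le hb
      ((aux_intOn_rpow (p-1) hy hyx).const_mul C₁)
    refine le_trans hnb ?_
    rw [intervalIntegral.integral_const_mul, aux_rpow_integral p hp0 hy hyx]
    rw [abs_mul, abs_div, _root_.abs_of_nonneg hC₁0,
      show C₁ / |p| * (Real.log x ^ p + Real.log y ^ p)
        = C₁ * ((Real.log x ^ p + Real.log y ^ p) / |p|) from by ring]
    have hp' : 0 < |p| := abs_pos.mpr hp0
    gcongr
    exact (abs_sub _ _).trans (by
      rw [_root_.abs_of_nonneg (Real.rpow_nonneg hlx.le _),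
        _root_.abs_of_nonneg (Real.rpow_nonneg hly.le _)])
  -- final assembly
  set ex := (∑ n ∈ Icc 1 ⌊x⌋₊, a n) - M x with hexdef
  set ey := (∑ n ∈ Icc 1 ⌊y⌋₊, a n) - M y with heydef
  have hex : ‖ex‖ ≤ C₁ * x * Real.log x ^ (z.re - 2) := hC₁ x hx
  have hey : ‖ey‖ ≤ C₁ * y * Real.log y ^ (z.re - 2) := hC₁ y hy
  have hsumeq : ∑ n ∈ Ioc ⌊y⌋₊ ⌊x⌋₊, a n / (n:ℂ)
      = ∑ k ∈ Ioc ⌊y⌋₊ ⌊x⌋₊, ((((k:ℕ):ℝ):ℂ))⁻¹ * a k :=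
    Finset.sum_congr rfl fun k _ => by push_cast; rw [div_eq_inv_mul]
  have hx0' : ((x:ℝ):ℂ) ≠ 0 := by exact_mod_cast hx0.ne'
  have hy0' : ((y:ℝ):ℂ) ≠ 0 := by exact_mod_cast hy0.ne'
  have hkey : (∑ n ∈ Ioc ⌊y⌋₊ ⌊x⌋₊, a n / (n:ℂ))
        - (c / z) * (((Real.log x : ℂ))^z - ((Real.log y : ℂ))^z)
      = c * ((Real.log x : ℂ))^(z-1) - c * ((Real.log y : ℂ))^(z-1)
        + ((x:ℝ):ℂ)⁻¹ * ex - ((y:ℝ):ℂ)⁻¹ * ey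
        - ∫ t in y..x, g t * (S t - a 0 - M t) := by
    have hPx : ∑ n ∈ Icc 1 ⌊x⌋₊, a n = M x + ex := by rw [hexdef]; ring
    have hPy : ∑ n ∈ Icc 1 ⌊y⌋₊, a n = M y + ey := by rw [heydef]; ring
    rw [hsumeq, habel, hIeq, hsplit, hI1, hI2, hsum0 ⌊x⌋₊, hsum0 ⌊y⌋₊, hPx, hPy]
    simp only [hMdef]
    have hxinv : ((x:ℝ):ℂ)⁻¹ * ((x:ℝ):ℂ) = 1 := inv_mul_cancel₀ hx0'
    have hyinv : ((y:ℝ):ℂ)⁻¹ * ((y:ℝ):ℂ) = 1 := inv_mul_cancel₀ hy0'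
    linear_combination (c * ((Real.log x : ℂ))^(z-1)) * hxinv
      - (c * ((Real.log y : ℂ))^(z-1)) * hyinv
  rw [hkey]
  have T1 : ∀ u v : ℂ, ‖u - v‖ ≤ ‖u‖ + ‖v‖ :=
    fun u v => norm_sub_le u v
  have T2 : ∀ u v : ℂ, ‖u + v‖ ≤ ‖u‖ + ‖v‖ :=
    fun u v => norm_add_le u v
  have b1 : ‖c * ((Real.log x : ℂ))^(z-1)‖ = ‖c‖ * Real.log x ^ p := by
    rw [norm_mul, Complex.norm_cpow_eq_rpow_re_of_pos hlx]
    congr 1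
  have b2 : ‖c * ((Real.log y : ℂ))^(z-1)‖ = ‖c‖ * Real.log y ^ p := by
    rw [norm_mul, Complex.norm_cpow_eq_rpow_re_of_pos hly]
    congr 1
  have hbnd : ∀ t : ℝ, 0 < t → Real.log 2 ≤ Real.log t → ∀ e : ℂ,
      ‖e‖ ≤ C₁ * t * Real.log t ^ (z.re - 2) →
      ‖((t:ℝ):ℂ)⁻¹ * e‖ ≤ C₁ / Real.log 2 * Real.log t ^ p := by
    intro t ht0 hlt e he
    have hltpos : 0 < Real.log t := lt_of_lt_of_le hlog2 hlt
    rw [norm_mul, norm_inv, Complex.norm_real, Real.norm_eq_abs, _root_.abs_of_pos ht0]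
    have h2p : z.re - 2 = p - 1 := by rw [hpdef]; ring
    calc t⁻¹ * ‖e‖ ≤ t⁻¹ * (C₁ * t * Real.log t ^ (z.re - 2)) :=
          mul_le_mul_of_nonneg_left he (by positivity)
      _ = C₁ * Real.log t ^ (p - 1) := by rw [h2p]; field_simp
      _ = C₁ * (Real.log t ^ p / Real.log t) := by
          rw [Real.rpow_sub hltpos, Real.rpow_one]
      _ ≤ C₁ * (Real.log t ^ p / Real.log 2) := by gcongr
      _ = C₁ / Real.log 2 * Real.log t ^ p := by ring
  have b3 := hbnd x hx0 hl2x ex hex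
  have b4 := hbnd y hy0 hl2y ey hey
  calc ‖c * ((Real.log x : ℂ))^(z-1) - c * ((Real.log y : ℂ))^(z-1)
        + ((x:ℝ):ℂ)⁻¹ * ex - ((y:ℝ):ℂ)⁻¹ * ey
        - ∫ t in y..x, g t * (S t - a 0 - M t)‖
      ≤ ‖c * ((Real.log x : ℂ))^(z-1) - c * ((Real.log y : ℂ))^(z-1)
          + ((x:ℝ):ℂ)⁻¹ * ex - ((y:ℝ):ℂ)⁻¹ * ey‖
        + ‖∫ t in y..x, g t * (S t - a 0 - M t)‖ := T1 _ _
    _ ≤ (‖c * ((Real.log x : ℂ))^(z-1) - c * ((Real.log y : ℂ))^(z-1)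
          + ((x:ℝ):ℂ)⁻¹ * ex‖ + ‖((y:ℝ):ℂ)⁻¹ * ey‖)
        + ‖∫ t in y..x, g t * (S t - a 0 - M t)‖ :=
        by gcongr; exact T1 _ _
    _ ≤ ((‖c * ((Real.log x : ℂ))^(z-1) - c * ((Real.log y : ℂ))^(z-1)‖
          + ‖((x:ℝ):ℂ)⁻¹ * ex‖) + ‖((y:ℝ):ℂ)⁻¹ * ey‖)
        + ‖∫ t in y..x, g t * (S t - a 0 - M t)‖ :=
        by gcongr; exact T2 _ _
    _ ≤ (((‖c * ((Real.log x : ℂ))^(z-1)‖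
          + ‖c * ((Real.log y : ℂ))^(z-1)‖)
          + ‖((x:ℝ):ℂ)⁻¹ * ex‖) + ‖((y:ℝ):ℂ)⁻¹ * ey‖)
        + ‖∫ t in y..x, g t * (S t - a 0 - M t)‖ :=
        by gcongr; exact T1 _ _
    _ ≤ (((‖c‖ * Real.log x ^ p + ‖c‖ * Real.log y ^ p)
          + C₁ / Real.log 2 * Real.log x ^ p) + C₁ / Real.log 2 * Real.log y ^ p)
        + C₁ / |p| * (Real.log x ^ p + Real.log y ^ p) := by
        rw [b1, b2]
        exact add_le_add (add_le_add (add_le_add le_rfl b3) b4) hI3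
    _ = (‖c‖ + C₁ / Real.log 2 + C₁ / |p|)
        * (Real.log x ^ p + Real.log y ^ p) := by ring
end

section
/- Let a : ℕ → ℂ with partial sums A(x) = ∑_{n ≤ x} a(n) satisfying |A(t)| ≤ c·t·(log t)^{−α−1} for all t ≥ 2, where c > 0 and α > 0 are real constants. Then the series ∑_{n=1}^∞ a(n)/n^s converges for every real s ≥ 1, and lim_{s→1⁺} ∑_{n=1}^∞ a(n)/n^s = ∑_{n=1}^∞ a(n)/n. -/
open Complex Finset Filter Real MeasureTheory

namespace DirAux

lemma log_ge_one {N : ℕ} (hN : 3 ≤ N) : 1 ≤ Real.log N := by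
  have h3 : (3:ℝ) ≤ N := by exact_mod_cast hN
  have he : Real.exp 1 ≤ N := le_trans (by linarith [Real.exp_one_lt_d9]) h3
  calc (1:ℝ) = Real.log (Real.exp 1) := (Real.log_exp 1).symm
  _ ≤ Real.log N := Real.log_le_log (Real.exp_pos 1) he

lemma tail_bound (a : ℕ → ℂ) (c α : ℝ) (hc : 0 < c) (hα : 0 < α)
    (hA : ∀ t : ℝ, 2 ≤ t →
      ‖∑ n ∈ Finset.Icc 1 ⌊t⌋₊, a n‖ ≤ c * t * Real.log t ^ (-α - 1))
    (s : ℝ) (hs : 1 ≤ s) (N M : ℕ) (hN : 3 ≤ N) (hNM : N ≤ M) :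
    ‖∑ n ∈ Finset.Ioc N M, a n / (n : ℂ) ^ (s : ℂ)‖ ≤
      (2 + s / α) * c * Real.log N ^ (-α) := by
  have hN3 : (3:ℝ) ≤ N := by exact_mod_cast hN
  have hN0 : (0:ℝ) < N := by linarith
  have hM3 : (3:ℝ) ≤ M := le_trans hN3 (by exact_mod_cast hNM)
  have hNM' : (N:ℝ) ≤ M := by exact_mod_cast hNM
  have hlogN1 : 1 ≤ Real.log N := log_ge_one hN
  have hlogN0 : 0 < Real.log N := by linarith
  set L : ℝ := Real.log N ^ (-α) with hL
  have hLpos : 0 < L := Real.rpow_pos_of_pos hlogN0 _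
  -- the coefficient sequence with 0 at 0
  set cs : ℕ → ℂ := fun n => if n = 0 then 0 else a n with hcs
  set S : ℕ → ℂ := fun k => ∑ i ∈ Finset.Icc 1 k, a i with hSdef
  have hS : ∀ k : ℕ, ∑ i ∈ Finset.Icc 0 k, cs i = S k := by
    intro k
    have he : Finset.Icc 0 k = insert 0 (Finset.Icc 1 k) := by
      ext x; simp only [Finset.mem_Icc, Finset.mem_insert]; omega
    rw [he, Finset.sum_insert (by simp)]
    have h0 : cs 0 = 0 := by simp [hcs]
    rw [h0, zero_add]
    refine Finset.sum_congr rfl fun i hi => ?_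
    simp only [hcs]
    rw [if_neg (by have := (Finset.mem_Icc.mp hi).1; omega)]
  -- bound on S via hA
  have hSbound : ∀ t : ℝ, 3 ≤ t → ‖S ⌊t⌋₊‖ ≤ c * t * Real.log t ^ (-α - 1) := by
    intro t ht
    simpa [hSdef] using hA t (by linarith)
  -- the weight function
  set f : ℝ → ℂ := fun t => ((t ^ (-s) : ℝ) : ℂ) with hf
  have hfd : ∀ t : ℝ, 0 < t → HasDerivAt f (((-s) * t ^ (-s - 1) : ℝ) : ℂ) t := by
    intro t ht
    exact HasDerivAt.ofReal_comp (Real.hasDerivAt_rpow_const (Or.inl (ne_of_gt ht)))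
  have hderiv : ∀ t : ℝ, 0 < t → deriv f t = (((-s) * t ^ (-s - 1) : ℝ) : ℂ) := by
    intro t ht; exact (hfd t ht).deriv
  have hderivCont : ContinuousOn (deriv f) (Set.Icc (N:ℝ) M) := by
    refine ContinuousOn.congr (f := fun t : ℝ => (((-s) * t ^ (-s - 1) : ℝ) : ℂ)) ?_ ?_
    · refine Continuous.comp_continuousOn Complex.continuous_ofReal ?_
      refine ContinuousOn.mul continuousOn_const ?_
      intro t ht
      exact (Real.continuousAt_rpow_const t _ (Or.inl (ne_of_gt (lt_of_lt_of_le hN0 ht.1)))).continuousWithinAt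
    · intro t ht; exact hderiv t (lt_of_lt_of_le hN0 ht.1)
  have hf_int : IntegrableOn (deriv f) (Set.Icc (N:ℝ) M) := hderivCont.integrableOn_Icc
  have habel := sum_mul_eq_sub_sub_integral_mul cs (le_of_lt hN0) hNM'
    (fun t ht => (hfd t (lt_of_lt_of_le hN0 ht.1)).differentiableAt) hf_int
  rw [Nat.floor_natCast, Nat.floor_natCast] at habel
  simp only [hS] at habel
  -- rewrite LHS
  have hlhs : ∑ n ∈ Finset.Ioc N M, a n / (n : ℂ) ^ (s : ℂ) =
      ∑ k ∈ Finset.Ioc N M, f k * cs k := by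
    refine Finset.sum_congr rfl fun k hk => ?_
    have hk1 : 1 ≤ k := le_trans (by omega) (Finset.mem_Ioc.mp hk).1
    have hk0 : (0:ℝ) ≤ k := by positivity
    have hkne : (k:ℂ) ≠ 0 := by exact_mod_cast Nat.cast_ne_zero.mpr (by omega)
    simp only [hcs, hf]
    rw [if_neg (by omega), Complex.ofReal_cpow hk0, Complex.ofReal_neg, Complex.cpow_neg,
      div_eq_mul_inv]
    push_cast
    ring
  rw [hlhs, habel]
  -- now bound the three pieces
  have hterm : ∀ K : ℕ, N ≤ K → ‖f K * S K‖ ≤ c * L := by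
    intro K hK
    have hK3 : (3:ℝ) ≤ K := le_trans hN3 (by exact_mod_cast hK)
    have hK0 : (0:ℝ) < K := by linarith
    have hlogK : Real.log N ≤ Real.log K := Real.log_le_log hN0 (by exact_mod_cast hK)
    have hSb : ‖S K‖ ≤ c * K * Real.log K ^ (-α - 1) := by
      have := hSbound K hK3
      rwa [Nat.floor_natCast] at this
    have hfK : ‖f K‖ = (K:ℝ) ^ (-s) := by
      simp only [hf, Complex.norm_real, Real.norm_eq_abs]
      exact _root_.abs_of_nonneg (Real.rpow_nonneg hK0.le _)
    rw [norm_mul, hfK]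
    calc (K:ℝ) ^ (-s) * ‖S K‖ ≤ (K:ℝ) ^ (-s) * (c * K * Real.log K ^ (-α - 1)) := by
          exact mul_le_mul_of_nonneg_left hSb (Real.rpow_nonneg hK0.le _)
    _ = c * ((K:ℝ) ^ (-s) * K) * Real.log K ^ (-α - 1) := by ring
    _ = c * (K:ℝ) ^ (1 - s) * Real.log K ^ (-α - 1) := by
          rw [show (1:ℝ) - s = -s + 1 by ring, Real.rpow_add_one (ne_of_gt hK0)]
    _ ≤ c * 1 * Real.log N ^ (-α - 1) := by
          refine mul_le_mul ?_ ?_ (Real.rpow_nonneg (by linarith : (0:ℝ) ≤ Real.log K) _) (by positivity)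
          · exact mul_le_mul_of_nonneg_left
              (Real.rpow_le_one_of_one_le_of_nonpos (by linarith) (by linarith)) hc.le
          · exact Real.rpow_le_rpow_of_nonpos hlogN0 hlogK (by linarith)
    _ ≤ c * L := by
          rw [mul_one, hL]
          exact mul_le_mul_of_nonneg_left
            (Real.rpow_le_rpow_of_exponent_le hlogN1 (by linarith)) hc.le
  have hint : ‖∫ t in Set.Ioc (N:ℝ) (M:ℝ), deriv f t * S ⌊t⌋₊‖ ≤ s / α * c * L := by
    set g : ℝ → ℝ := fun t => c * s * (N:ℝ) ^ (1 - s) * (t⁻¹ * Real.log t ^ (-α - 1)) with hg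
    have hs0 : (0:ℝ) < s := by linarith
    have hicont : ContinuousOn (fun t : ℝ => t⁻¹ * Real.log t ^ (-α - 1)) (Set.Icc (N:ℝ) M) := by
      intro t ht
      have ht0 : (0:ℝ) < t := lt_of_lt_of_le hN0 ht.1
      have hlt : 0 < Real.log t := lt_of_lt_of_le hlogN0 (Real.log_le_log hN0 ht.1)
      refine ContinuousWithinAt.mul ?_ ?_
      · exact (continuousAt_inv₀ (ne_of_gt ht0)).continuousWithinAt
      · exact ((Real.continuousAt_rpow_const _ _ (Or.inl (ne_of_gt hlt))).comp
          (Real.continuousAt_log (ne_of_gt ht0))).continuousWithinAt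
    have hgcont : ContinuousOn g (Set.Icc (N:ℝ) M) := continuousOn_const.mul hicont
    have hgint : IntegrableOn g (Set.Ioc (N:ℝ) M) :=
      hgcont.integrableOn_Icc.mono_set Set.Ioc_subset_Icc_self
    have hpt : ∀ t ∈ Set.Ioc (N:ℝ) (M:ℝ), ‖deriv f t * S ⌊t⌋₊‖ ≤ g t := by
      intro t ht
      have ht3 : (3:ℝ) ≤ t := le_trans hN3 ht.1.le
      have ht0 : (0:ℝ) < t := by linarith
      have hlt0 : 0 < Real.log t := lt_of_lt_of_le hlogN0 (Real.log_le_log hN0 ht.1.le)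
      rw [norm_mul, hderiv t ht0]
      have h1 : ‖(((-s) * t ^ (-s - 1) : ℝ) : ℂ)‖ = s * t ^ (-s - 1) := by
        rw [Complex.norm_real, Real.norm_eq_abs, abs_mul, abs_neg,
          _root_.abs_of_nonneg (by linarith : (0:ℝ) ≤ s),
          _root_.abs_of_nonneg (Real.rpow_nonneg ht0.le _)]
      rw [h1]
      have ht1 : t ^ (-s - 1) * t = t ^ (-s) := by
        rw [← Real.rpow_add_one (ne_of_gt ht0)]; ring_nf
      have ht2 : t ^ (1 - s) * t⁻¹ = t ^ (-s) := by
        rw [← Real.rpow_neg_one t, ← Real.rpow_add ht0]; ring_nf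
      have hfac : t ^ (1 - s) ≤ (N:ℝ) ^ (1 - s) :=
        Real.rpow_le_rpow_of_nonpos hN0 ht.1.le (by linarith)
      calc s * t ^ (-s - 1) * ‖S ⌊t⌋₊‖
          ≤ s * t ^ (-s - 1) * (c * t * Real.log t ^ (-α - 1)) :=
            mul_le_mul_of_nonneg_left (hSbound t ht3) (by positivity)
        _ = (t ^ (-s - 1) * t) * (c * s * Real.log t ^ (-α - 1)) := by ring
        _ = (t ^ (1 - s) * t⁻¹) * (c * s * Real.log t ^ (-α - 1)) := by rw [ht1, ht2]
        _ = t ^ (1 - s) * (c * s * (t⁻¹ * Real.log t ^ (-α - 1))) := by ring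
        _ ≤ (N:ℝ) ^ (1 - s) * (c * s * (t⁻¹ * Real.log t ^ (-α - 1))) := by
            refine mul_le_mul_of_nonneg_right hfac ?_
            exact mul_nonneg (by positivity)
              (mul_nonneg (by positivity) (Real.rpow_nonneg hlt0.le _))
        _ = g t := by rw [hg]; ring
    have hnorm1 : ‖∫ t in Set.Ioc (N:ℝ) (M:ℝ), deriv f t * S ⌊t⌋₊‖
        ≤ ∫ t in Set.Ioc (N:ℝ) (M:ℝ), ‖deriv f t * S ⌊t⌋₊‖ :=
      norm_integral_le_integral_norm _
    have hnorm2 : (∫ t in Set.Ioc (N:ℝ) (M:ℝ), ‖deriv f t * S ⌊t⌋₊‖)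
        ≤ ∫ t in Set.Ioc (N:ℝ) (M:ℝ), g t := by
      refine integral_mono_of_nonneg (Eventually.of_forall fun t => norm_nonneg _) hgint ?_
      exact (ae_restrict_iff' measurableSet_Ioc).mpr (Eventually.of_forall hpt)
    have hFTC : (∫ t in (N:ℝ)..(M:ℝ), t⁻¹ * Real.log t ^ (-α - 1))
        = α⁻¹ * Real.log N ^ (-α) - α⁻¹ * Real.log M ^ (-α) := by
      have hder : ∀ t ∈ Set.uIcc (N:ℝ) (M:ℝ),
          HasDerivAt (fun x => -α⁻¹ * Real.log x ^ (-α)) (t⁻¹ * Real.log t ^ (-α - 1)) t := by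
        intro t ht
        rw [Set.uIcc_of_le hNM'] at ht
        have ht0 : (0:ℝ) < t := lt_of_lt_of_le hN0 ht.1
        have hlt0 : 0 < Real.log t := lt_of_lt_of_le hlogN0 (Real.log_le_log hN0 ht.1)
        have h1 : HasDerivAt Real.log t⁻¹ t := Real.hasDerivAt_log (ne_of_gt ht0)
        have h2 : HasDerivAt (fun x : ℝ => x ^ (-α)) (-α * Real.log t ^ (-α - 1)) (Real.log t) :=
          Real.hasDerivAt_rpow_const (Or.inl (ne_of_gt hlt0))
        have h3 := (h2.comp t h1).const_mul (-α⁻¹)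
        exact h3.congr_deriv (by linear_combination (t⁻¹ * Real.log t ^ (-α - 1)) * inv_mul_cancel₀ hα.ne')
      have hcont2 : ContinuousOn (fun t : ℝ => t⁻¹ * Real.log t ^ (-α - 1))
          (Set.uIcc (N:ℝ) M) := by rw [Set.uIcc_of_le hNM']; exact hicont
      rw [intervalIntegral.integral_eq_sub_of_hasDerivAt hder hcont2.intervalIntegrable]
      ring
    have hval : (∫ t in Set.Ioc (N:ℝ) (M:ℝ), g t)
        = c * s * (N:ℝ) ^ (1 - s) *
          (α⁻¹ * Real.log N ^ (-α) - α⁻¹ * Real.log M ^ (-α)) := by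
      simp only [hg]
      rw [MeasureTheory.integral_const_mul, ← intervalIntegral.integral_of_le hNM', hFTC]
    have hlogM : Real.log N ≤ Real.log M := Real.log_le_log hN0 hNM'
    have hB0 : 0 ≤ α⁻¹ * Real.log N ^ (-α) - α⁻¹ * Real.log M ^ (-α) := by
      have := Real.rpow_le_rpow_of_nonpos hlogN0 hlogM (by linarith : -α ≤ 0)
      have hα' : (0:ℝ) ≤ α⁻¹ := by positivity
      nlinarith
    have hB1 : α⁻¹ * Real.log N ^ (-α) - α⁻¹ * Real.log M ^ (-α) ≤ α⁻¹ * L := by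
      have h2 : 0 ≤ α⁻¹ * Real.log M ^ (-α) :=
        mul_nonneg (by positivity) (Real.rpow_nonneg (by linarith) _)
      rw [hL]; linarith
    have hK1 : c * s * (N:ℝ) ^ (1 - s) ≤ c * s := by
      have h1 : (N:ℝ) ^ (1 - s) ≤ 1 :=
        Real.rpow_le_one_of_one_le_of_nonpos (by linarith) (by linarith)
      calc c * s * (N:ℝ) ^ (1 - s) ≤ c * s * 1 :=
            mul_le_mul_of_nonneg_left h1 (mul_nonneg hc.le hs0.le)
      _ = c * s := mul_one _
    calc ‖∫ t in Set.Ioc (N:ℝ) (M:ℝ), deriv f t * S ⌊t⌋₊‖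
        ≤ ∫ t in Set.Ioc (N:ℝ) (M:ℝ), g t := hnorm1.trans hnorm2
      _ = c * s * (N:ℝ) ^ (1 - s) *
          (α⁻¹ * Real.log N ^ (-α) - α⁻¹ * Real.log M ^ (-α)) := hval
      _ ≤ c * s * (α⁻¹ * Real.log N ^ (-α) - α⁻¹ * Real.log M ^ (-α)) :=
          mul_le_mul_of_nonneg_right hK1 hB0
      _ ≤ c * s * (α⁻¹ * L) := by
          refine mul_le_mul_of_nonneg_left hB1 (by positivity)
      _ = s / α * c * L := by rw [div_eq_mul_inv]; ring
  calc ‖f M * S M - f N * S N - ∫ t in Set.Ioc (N:ℝ) (M:ℝ), deriv f t * S ⌊t⌋₊‖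
      ≤ ‖f M * S M - f N * S N‖ + ‖∫ t in Set.Ioc (N:ℝ) (M:ℝ), deriv f t * S ⌊t⌋₊‖ :=
        norm_sub_le _ _
    _ ≤ ‖f M * S M‖ + ‖f N * S N‖ + ‖∫ t in Set.Ioc (N:ℝ) (M:ℝ), deriv f t * S ⌊t⌋₊‖ := by
        linarith [norm_sub_le (f M * S M) (f N * S N)]
    _ ≤ c * L + c * L + s / α * c * L := by
        have h1 := hterm M hNM
        have h2 := hterm N le_rfl
        linarith
    _ = (2 + s / α) * c * L := by ring

end DirAux

open DirAux in
theorem dirichlet_series_converges_and_continuous (a : ℕ → ℂ) (c α : ℝ)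
    (hc : 0 < c) (hα : 0 < α)
    (hA : ∀ t : ℝ, 2 ≤ t →
      ‖∑ n ∈ Finset.Icc 1 ⌊t⌋₊, a n‖ ≤ c * t * Real.log t ^ (-α - 1)) :
    ∃ f : ℝ → ℂ,
      (∀ s : ℝ, 1 ≤ s →
        Filter.Tendsto (fun N : ℕ => ∑ n ∈ Finset.Icc 1 N, a n / (n : ℂ) ^ (s : ℂ))
          Filter.atTop (nhds (f s))) ∧
      Filter.Tendsto f (nhdsWithin 1 (Set.Ioi 1)) (nhds (f 1)) := by
  set F : ℝ → ℕ → ℂ := fun s N => ∑ n ∈ Finset.Icc 1 N, a n / (n : ℂ) ^ (s : ℂ) with hF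
  have hdiff : ∀ (s : ℝ) (N M : ℕ), N ≤ M →
      F s M - F s N = ∑ n ∈ Finset.Ioc N M, a n / (n : ℂ) ^ (s : ℂ) := by
    intro s N M h
    have e : ∀ K : ℕ, F s K = ∑ n ∈ Finset.Ioc 0 K, a n / (n : ℂ) ^ (s : ℂ) := by
      intro K
      rw [hF]
      refine Finset.sum_congr ?_ fun _ _ => rfl
      ext x; simp only [Finset.mem_Icc, Finset.mem_Ioc]; omega
    rw [e, e, ← Finset.sum_Ioc_consecutive _ (Nat.zero_le N) h]
    ring
  have hEz : Tendsto (fun N : ℕ => Real.log N ^ (-α)) atTop (nhds 0) :=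
    (tendsto_rpow_neg_atTop hα).comp (Real.tendsto_log_atTop.comp tendsto_natCast_atTop_atTop)
  have hconv : ∀ s : ℝ, 1 ≤ s → ∃ L, Tendsto (fun N => F s N) atTop (nhds L) := by
    intro s hs
    have hs0 : (0:ℝ) < s := by linarith
    refine cauchySeq_tendsto_of_complete (Metric.cauchySeq_iff'.mpr ?_)
    intro ε hε
    have hpos : (0:ℝ) < (2 + s / α) * c :=
      mul_pos (by have := div_pos hs0 hα; linarith) hc
    have hev : ∀ᶠ N : ℕ in atTop, Real.log N ^ (-α) < ε / ((2 + s / α) * c) :=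
      hEz.eventually (gt_mem_nhds (by positivity))
    obtain ⟨N, hNlt, hN3⟩ := ((hev.and (eventually_ge_atTop 3)).exists)
    refine ⟨N, fun n hn => ?_⟩
    rw [dist_eq_norm, hdiff s N n hn]
    calc ‖∑ i ∈ Finset.Ioc N n, a i / (i : ℂ) ^ (s : ℂ)‖
        ≤ (2 + s / α) * c * Real.log N ^ (-α) :=
          tail_bound a c α hc hα hA s hs N n hN3 hn
      _ < ε := by rw [mul_comm]; exact (lt_div_iff₀ hpos).mp hNlt
  set f : ℝ → ℂ := fun s => if h : 1 ≤ s then (hconv s h).choose else 0 with hfdef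
  have hf : ∀ s : ℝ, 1 ≤ s → Tendsto (fun N => F s N) atTop (nhds (f s)) := by
    intro s hs
    rw [hfdef]
    simp only [dif_pos hs]
    exact (hconv s hs).choose_spec
  have htail : ∀ s : ℝ, 1 ≤ s → ∀ N : ℕ, 3 ≤ N →
      ‖f s - F s N‖ ≤ (2 + s / α) * c * Real.log N ^ (-α) := by
    intro s hs N hN
    have h1 : Tendsto (fun M : ℕ => ‖F s M - F s N‖) atTop (nhds ‖f s - F s N‖) :=
      ((hf s hs).sub tendsto_const_nhds).norm
    refine le_of_tendsto h1 ?_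
    filter_upwards [eventually_ge_atTop N] with M hM
    rw [hdiff s N M hM]
    exact tail_bound a c α hc hα hA s hs N M hN hM
  refine ⟨f, fun s hs => hf s hs, ?_⟩
  rw [Metric.tendsto_nhdsWithin_nhds]
  intro ε hε
  have hpos2 : (0:ℝ) < (2 + 2 / α) * c := mul_pos (by have := div_pos two_pos hα; linarith) hc
  have hev : ∀ᶠ N : ℕ in atTop, (2 + 2 / α) * c * Real.log N ^ (-α) < ε / 4 := by
    have h := hEz.eventually (gt_mem_nhds (show (0:ℝ) < ε / 4 / ((2 + 2 / α) * c) by positivity))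
    filter_upwards [h] with N hN
    calc (2 + 2 / α) * c * Real.log N ^ (-α)
        < (2 + 2 / α) * c * (ε / 4 / ((2 + 2 / α) * c)) := by
          exact mul_lt_mul_of_pos_left hN hpos2
      _ = ε / 4 := by field_simp
  obtain ⟨N, hNb, hN3⟩ := (hev.and (eventually_ge_atTop 3)).exists
  have hL0 : (0:ℝ) ≤ Real.log N ^ (-α) :=
    Real.rpow_nonneg (by linarith [log_ge_one hN3]) _
  have hmono : ∀ s' : ℝ, s' ≤ 2 →
      (2 + s' / α) * c * Real.log N ^ (-α) ≤ (2 + 2 / α) * c * Real.log N ^ (-α) := by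
    intro s' h
    have h2 : s' / α ≤ 2 / α := by gcongr
    exact mul_le_mul_of_nonneg_right (mul_le_mul_of_nonneg_right (by linarith) hc.le) hL0
  -- continuity of the partial sum in s
  have hcont : Continuous (fun s : ℝ => F s N) := by
    rw [hF]
    refine continuous_finset_sum _ fun n hn => ?_
    have hn0 : (n : ℂ) ≠ 0 := by
      have := (Finset.mem_Icc.mp hn).1
      exact_mod_cast Nat.cast_ne_zero.mpr (by omega)
    refine Continuous.div continuous_const ?_ ?_
    · rw [continuous_iff_continuousAt]
      intro x
      exact (continuousAt_const_cpow hn0).comp Complex.continuous_ofReal.continuousAt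
    · intro x
      simp [Complex.cpow_eq_zero_iff, hn0]
  have hcontAt := hcont.continuousAt (x := 1)
  rw [Metric.continuousAt_iff] at hcontAt
  obtain ⟨δ, hδ0, hδ⟩ := hcontAt (ε / 4) (by positivity)
  refine ⟨min δ 1, by positivity, ?_⟩
  intro s hsIoi hdist
  have hs1 : (1:ℝ) < s := hsIoi
  have hs2 : s ≤ 2 := by
    have h1 : dist s 1 < 1 := lt_of_lt_of_le hdist (min_le_right _ _)
    rw [Real.dist_eq] at h1
    have := abs_lt.mp h1
    linarith [this.1, this.2]
  have hmid : dist (F s N) (F 1 N) < ε / 4 := hδ (lt_of_lt_of_le hdist (min_le_left _ _))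
  have t1 : ‖f s - F s N‖ < ε / 4 :=
    lt_of_le_of_lt (le_trans (htail s hs1.le N hN3) (hmono s hs2)) hNb
  have t2 : ‖f 1 - F 1 N‖ < ε / 4 :=
    lt_of_le_of_lt (le_trans (htail 1 le_rfl N hN3) (hmono 1 (by norm_num))) hNb
  have htri : dist (f s) (f 1) ≤ ‖f s - F s N‖ + dist (F s N) (F 1 N) + ‖f 1 - F 1 N‖ := by
    rw [dist_eq_norm, dist_eq_norm]
    have e : f s - f 1 = (f s - F s N) + (F s N - F 1 N) + -(f 1 - F 1 N) := by ring
    rw [e]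
    calc ‖(f s - F s N) + (F s N - F 1 N) + -(f 1 - F 1 N)‖
        ≤ ‖(f s - F s N) + (F s N - F 1 N)‖ + ‖-(f 1 - F 1 N)‖ := norm_add_le _ _
      _ ≤ ‖f s - F s N‖ + ‖F s N - F 1 N‖ + ‖f 1 - F 1 N‖ := by
          rw [norm_neg]; exact add_le_add_left (norm_add_le _ _) _
  linarith
end
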